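/- arXiv:1101.2731 — 5 statements merged into one kernel-verified Lean document; each statement's English description precedes it below -/
import Mathlib

section
/- Let n ≥ 2 and let β, γ ∈ MB_∞. If x_{n−1} right-divides γβ and x_{n−1} does not divide β, then x_{n−1} right-divides γ. -/
set_option linter.dupNamespace false

namespace BraidAux

abbrev W := List ℕ+

/-- adjacency of indices -/
def Adj (i j : ℕ+) : Prop := (i:ℕ) + 1 = j ∨ (j:ℕ) + 1 = i
/-- far indices -/
def Far (i j : ℕ+) : Prop := (i:ℕ) + 2 ≤ j ∨ (j:ℕ) + 2 ≤ i

lemma Adj.symm {i j : ℕ+} (h : Adj i j) : Adj j i := h.elim Or.inr Or.inl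
lemma Far.symm {i j : ℕ+} (h : Far i j) : Far j i := h.elim Or.inr Or.inl

lemma trichotomy (i j : ℕ+) : i = j ∨ Adj i j ∨ Far i j := by
  have : (i:ℕ) = j ∨ Adj i j ∨ Far i j := by unfold Adj Far; omega
  rcases this with h | h
  · exact Or.inl (PNat.coe_injective h)
  · exact Or.inr h

lemma Adj.ne {i j : ℕ+} (h : Adj i j) : i ≠ j := by
  rintro rfl; unfold Adj at h; omega
lemma Far.ne {i j : ℕ+} (h : Far i j) : i ≠ j := by
  rintro rfl; unfold Far at h; omega
lemma Adj.not_far {i j : ℕ+} (h : Adj i j) : ¬ Far i j := by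
  unfold Adj Far at *; omega

/-- one-step rewriting -/
inductive BStep : W → W → Prop
  | braid (i : ℕ+) (p s : W) : BStep (p ++ (i+1) :: i :: (i+1) :: s) (p ++ i :: (i+1) :: i :: s)
  | braid' (i : ℕ+) (p s : W) : BStep (p ++ i :: (i+1) :: i :: s) (p ++ (i+1) :: i :: (i+1) :: s)
  | comm (i j : ℕ+) (h : i + 2 ≤ j) (p s : W) : BStep (p ++ i :: j :: s) (p ++ j :: i :: s)
  | comm' (i j : ℕ+) (h : i + 2 ≤ j) (p s : W) : BStep (p ++ j :: i :: s) (p ++ i :: j :: s)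

def BEq := Relation.ReflTransGen BStep

lemma BStep.symm {a b : W} (h : BStep a b) : BStep b a := by
  cases h with
  | braid i p s => exact .braid' i p s
  | braid' i p s => exact .braid i p s
  | comm i j h p s => exact .comm' i j h p s
  | comm' i j h p s => exact .comm i j h p s

lemma BEq.refl (a : W) : BEq a a := Relation.ReflTransGen.refl
lemma BEq.trans {a b c : W} (h : BEq a b) (h' : BEq b c) : BEq a c := Relation.ReflTransGen.trans h h'
lemma BEq.single {a b : W} (h : BStep a b) : BEq a b := Relation.ReflTransGen.single h
lemma BEq.symm {a b : W} (h : BEq a b) : BEq b a := by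
  induction h with
  | refl => exact .refl _
  | tail _ h ih => exact (BEq.single h.symm).trans ih

lemma BStep.append_left {a b : W} (l : W) (h : BStep a b) : BStep (l ++ a) (l ++ b) := by
  cases h with
  | braid i p s => simpa [← List.append_assoc] using BStep.braid i (l ++ p) s
  | braid' i p s => simpa [← List.append_assoc] using BStep.braid' i (l ++ p) s
  | comm i j h p s => simpa [← List.append_assoc] using BStep.comm i j h (l ++ p) s
  | comm' i j h p s => simpa [← List.append_assoc] using BStep.comm' i j h (l ++ p) s

lemma BStep.append_right {a b : W} (h : BStep a b) (r : W) : BStep (a ++ r) (b ++ r) := by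
  cases h with
  | braid i p s => simpa [List.append_assoc] using BStep.braid i p (s ++ r)
  | braid' i p s => simpa [List.append_assoc] using BStep.braid' i p (s ++ r)
  | comm i j h p s => simpa [List.append_assoc] using BStep.comm i j h p (s ++ r)
  | comm' i j h p s => simpa [List.append_assoc] using BStep.comm' i j h p (s ++ r)

lemma BEq.append_left {a b : W} (l : W) (h : BEq a b) : BEq (l ++ a) (l ++ b) := by
  induction h with
  | refl => exact .refl _
  | tail _ h ih => exact ih.trans (BEq.single (h.append_left l))

lemma BEq.append_right {a b : W} (h : BEq a b) (r : W) : BEq (a ++ r) (b ++ r) := by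
  induction h with
  | refl => exact .refl _
  | tail _ h ih => exact ih.trans (BEq.single (h.append_right r))

lemma BEq.append {a b c d : W} (h : BEq a b) (h' : BEq c d) : BEq (a ++ c) (b ++ d) :=
  (h.append_right c).trans (BEq.append_left b h')

lemma BStep.length {a b : W} (h : BStep a b) : a.length = b.length := by
  cases h <;> simp

lemma BEq.length {a b : W} (h : BEq a b) : a.length = b.length := by
  induction h with
  | refl => rfl
  | tail _ h ih => exact ih.trans h.length


instance (i j : ℕ+) : Decidable (Adj i j) := inferInstanceAs (Decidable (_ ∨ _))

/-- complement -/
def comp (i j : ℕ+) : W :=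
  if i = j then [] else if Adj i j then [j, i] else [j]

lemma comp_self (i : ℕ+) : comp i i = [] := by simp [comp]
lemma comp_adj {i j : ℕ+} (h : Adj i j) : comp i j = [j, i] := by
  simp [comp, h.ne, h]
lemma comp_far {i j : ℕ+} (h : Far i j) : comp i j = [j] := by
  have hna : ¬ Adj i j := fun ha => ha.not_far h
  simp [comp, h.ne, hna]

lemma comp_length (i j : ℕ+) : (comp i j).length = (comp j i).length := by
  rcases trichotomy i j with rfl | h | h
  · rfl
  · rw [comp_adj h, comp_adj h.symm]; rfl
  · rw [comp_far h, comp_far h.symm]; rfl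

lemma adj_succ (a : ℕ+) : Adj a (a+1) := Or.inl (by push_cast; ring)
lemma succ_ne (a : ℕ+) : a + 1 ≠ a := fun h => by
  have := congrArg (PNat.val) h; push_cast at this; omega
lemma far_of_le {a c : ℕ+} (h : a + 2 ≤ c) : Far a c := Or.inl (by exact_mod_cast h)

/-- swap two far letters anywhere -/
lemma swap_at {a b : ℕ+} (h : Far a b) (l r : W) :
    BEq (l ++ a :: b :: r) (l ++ b :: a :: r) := by
  rcases h with h | h
  · exact BEq.single (BStep.comm a b (by exact_mod_cast h) l r)
  · exact BEq.single (BStep.comm' b a (by exact_mod_cast h) l r)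

/-- braid move on adjacent letters anywhere -/
lemma braid_at {a b : ℕ+} (h : Adj a b) (l r : W) :
    BEq (l ++ a :: b :: a :: r) (l ++ b :: a :: b :: r) := by
  rcases h with h | h
  · have hb : b = a + 1 := by apply PNat.coe_injective; push_cast; omega
    subst hb
    exact BEq.single (BStep.braid' a l r)
  · have ha : a = b + 1 := by apply PNat.coe_injective; push_cast; omega
    subst ha
    exact BEq.single (BStep.braid b l r)

/-- chains of given length -/
def chainN : ℕ → W → W → Prop
  | 0, a, b => a = b
  | (n+1), a, c => ∃ b, BStep a b ∧ chainN n b c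

lemma chainN_of_beq {a b : W} (h : BEq a b) : ∃ n, chainN n a b := by
  induction h with
  | refl => exact ⟨0, rfl⟩
  | tail _ h ih =>
    obtain ⟨n, hn⟩ := ih
    refine ⟨n + 1, ?_⟩
    clear * - hn h
    induction n generalizing a with
    | zero => cases hn; exact ⟨_, h, rfl⟩
    | succ n ih =>
      obtain ⟨x, hx, hc⟩ := hn
      exact ⟨x, hx, ih hc⟩

lemma beq_of_chainN : ∀ {n} {a b : W}, chainN n a b → BEq a b := by
  intro n
  induction n with
  | zero => intro a b h; cases h; exact .refl _
  | succ n ih =>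
    rintro a b ⟨x, hx, hc⟩
    exact (BEq.single hx).trans (ih hc)

/-- head inversion for a single step -/
lemma bstep_head : ∀ {w b : W}, BStep w b → ∀ {i : ℕ+} {u : W}, w = i :: u →
    (∃ u', b = i :: u' ∧ BStep u u') ∨
    (∃ (k : ℕ+) (u₂ : W), k ≠ i ∧ u = comp i k ++ u₂ ∧ b = k :: (comp k i ++ u₂)) := by
  intro w b h
  cases h with
  | braid a p s =>
    intro i u hw
    rcases p with _ | ⟨x, p⟩
    · simp only [List.nil_append, List.cons.injEq] at hw
      obtain ⟨rfl, rfl⟩ := hw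
      refine Or.inr ⟨a, s, fun h => succ_ne a h.symm, ?_, ?_⟩
      · rw [comp_adj (adj_succ a).symm]; rfl
      · rw [comp_adj (adj_succ a)]; rfl
    · simp only [List.cons_append, List.cons.injEq] at hw
      obtain ⟨rfl, rfl⟩ := hw
      exact Or.inl ⟨_, rfl, .braid a p s⟩
  | braid' a p s =>
    intro i u hw
    rcases p with _ | ⟨x, p⟩
    · simp only [List.nil_append, List.cons.injEq] at hw
      obtain ⟨rfl, rfl⟩ := hw
      refine Or.inr ⟨a + 1, s, succ_ne a, ?_, ?_⟩
      · rw [comp_adj (adj_succ a)]; rfl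
      · rw [comp_adj (adj_succ a).symm]; rfl
    · simp only [List.cons_append, List.cons.injEq] at hw
      obtain ⟨rfl, rfl⟩ := hw
      exact Or.inl ⟨_, rfl, .braid' a p s⟩
  | comm a c hac p s =>
    intro i u hw
    rcases p with _ | ⟨x, p⟩
    · simp only [List.nil_append, List.cons.injEq] at hw
      obtain ⟨rfl, rfl⟩ := hw
      refine Or.inr ⟨c, s, ((far_of_le hac).ne).symm, ?_, ?_⟩
      · rw [comp_far (far_of_le hac)]; rfl
      · rw [comp_far (far_of_le hac).symm]; rfl
    · simp only [List.cons_append, List.cons.injEq] at hw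
      obtain ⟨rfl, rfl⟩ := hw
      exact Or.inl ⟨_, rfl, .comm a c hac p s⟩
  | comm' a c hac p s =>
    intro i u hw
    rcases p with _ | ⟨x, p⟩
    · simp only [List.nil_append, List.cons.injEq] at hw
      obtain ⟨rfl, rfl⟩ := hw
      refine Or.inr ⟨a, s, (far_of_le hac).ne, ?_, ?_⟩
      · rw [comp_far (far_of_le hac).symm]; rfl
      · rw [comp_far (far_of_le hac)]; rfl
    · simp only [List.cons_append, List.cons.injEq] at hw
      obtain ⟨rfl, rfl⟩ := hw
      exact Or.inl ⟨_, rfl, .comm' a c hac p s⟩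

/-- the inductive hypothesis package for the Garside key lemma -/
def IHty (L : ℕ) : Prop := ∀ (i : ℕ+) (u : W) (j : ℕ+) (v : W), (i :: u).length ≤ L →
  BEq (i :: u) (j :: v) → ∃ w, BEq u (comp i j ++ w) ∧ BEq v (comp j i ++ w)

lemma IH_beq {L} (IH : IHty L) {i : ℕ+} {u : W} {j : ℕ+} {v : W}
    (hlen : (i :: u : W).length ≤ L) (h : BEq (i :: u : W) (j :: v)) :
    ∃ w, BEq u (comp i j ++ w) ∧ BEq v (comp j i ++ w) :=
  IH i u j v hlen h

lemma cubeAsym (L : ℕ) (IH : IHty L) (i j k : ℕ+) (u₂ t : W) (hki : k ≠ i)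
    (hside : ¬ (Adj k i ∧ Far k j))
    (hlen : (comp k i ++ u₂).length ≤ L)
    (h : BEq (comp k i ++ u₂) (comp k j ++ t)) :
    ∃ w, BEq (comp i k ++ u₂) (comp i j ++ w) ∧ BEq (comp j k ++ t) (comp j i ++ w) := by
  by_cases hjk : j = k
  · subst hjk
    rw [comp_self, List.nil_append] at h
    try simp only [List.cons_append, List.nil_append] at h
    exact ⟨u₂, BEq.refl _, by rw [comp_self, List.nil_append]; exact h.symm⟩
  by_cases hji : i = j
  · subst hji
    rw [comp_self]
    have hu2t : BEq u₂ t := by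
      rcases trichotomy k i with h' | hA | hF
      · exact absurd h' hki
      · rw [comp_adj hA] at h hlen
        obtain ⟨w', hw1, hw2⟩ := IH_beq IH (u := k :: u₂) (v := k :: t) hlen h
        rw [comp_self, List.nil_append] at hw1 hw2
        try simp only [List.cons_append, List.nil_append] at hw1 hw2
        have h2 : BEq ((k : ℕ+) :: u₂ : W) (k :: t) := hw1.trans hw2.symm
        have hl2 : ((k : ℕ+) :: u₂ : W).length ≤ L := by
          simp only [List.length_cons, List.length_nil, List.cons_append, List.length_append] at hlen ⊢; omega
        obtain ⟨w'', g1, g2⟩ := IH_beq IH hl2 h2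
        rw [comp_self, List.nil_append] at g1 g2
        try simp only [List.cons_append, List.nil_append] at g1 g2
        exact g1.trans g2.symm
      · rw [comp_far hF] at h hlen
        obtain ⟨w', hw1, hw2⟩ := IH_beq IH (u := u₂) (v := t) hlen h
        rw [comp_self, List.nil_append] at hw1 hw2
        try simp only [List.cons_append, List.nil_append] at hw1 hw2
        exact hw1.trans hw2.symm
    exact ⟨comp i k ++ u₂, BEq.refl _,
      by rw [List.nil_append]; exact BEq.append_left _ hu2t.symm⟩
  rcases trichotomy k i with h' | hAki | hFki
  · exact absurd h' hki
  · -- case AA : Adj k i forces Adj k j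
    have hAkj : Adj k j := by
      rcases trichotomy k j with h' | h' | h'
      · exact absurd h'.symm hjk
      · exact h'
      · exact absurd ⟨hAki, h'⟩ hside
    have hFij : Far i j := by
      have : (i:ℕ) ≠ j := fun hc => hji (PNat.coe_injective hc)
      unfold Adj Far at *; omega
    rw [comp_adj hAki] at hlen
    try simp only [List.cons_append, List.nil_append] at hlen
    rw [comp_adj hAki, comp_adj hAkj] at h
    try simp only [List.cons_append, List.nil_append] at h
    obtain ⟨s, hs1, hs2⟩ := IH_beq IH (u := k :: u₂) (v := k :: t) hlen h
    rw [comp_far hFij] at hs1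
    try simp only [List.cons_append, List.nil_append] at hs1
    rw [comp_far hFij.symm] at hs2
    try simp only [List.cons_append, List.nil_append] at hs2
    have hl1 : ((k : ℕ+) :: u₂ : W).length ≤ L := by
      simp only [List.length_cons, List.length_nil, List.cons_append, List.length_append] at hlen ⊢; omega
    have hl2 : ((k : ℕ+) :: t : W).length ≤ L := by
      have := h.length
      simp only [List.length_cons, List.length_nil, List.cons_append, List.length_append] at hlen this ⊢; omega
    obtain ⟨r, hr1, hr2⟩ := IH_beq IH hl1 hs1
    rw [comp_adj hAkj] at hr1; rw [comp_adj hAkj.symm] at hr2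
    obtain ⟨q, hq1, hq2⟩ := IH_beq IH hl2 hs2
    rw [comp_adj hAki] at hq1; rw [comp_adj hAki.symm] at hq2
    have hkk : BEq ((k:ℕ+) :: j :: r : W) (k :: i :: q) := hr2.symm.trans hq2
    have hl3 : ((k:ℕ+) :: j :: r : W).length ≤ L := by
      have e1 := hr2.length
      have e2 := hs1.length
      simp only [List.length_cons, List.length_nil, List.cons_append, List.nil_append,
        List.length_append] at hl1 e1 e2 ⊢
      omega
    obtain ⟨w', hw1, hw2⟩ := IH_beq IH hl3 hkk
    rw [comp_self, List.nil_append] at hw1 hw2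
    try simp only [List.cons_append, List.nil_append] at hw1 hw2
    have hji' : BEq ((j:ℕ+) :: r : W) (i :: q) := hw1.trans hw2.symm
    have hl4 : ((j:ℕ+) :: r : W).length ≤ L := by
      simp only [List.length_cons] at hl3 ⊢; omega
    obtain ⟨p, hp1, hp2⟩ := IH_beq IH hl4 hji'
    rw [comp_far hFij.symm] at hp1
    try simp only [List.cons_append, List.nil_append] at hp1
    rw [comp_far hFij] at hp2
    try simp only [List.cons_append, List.nil_append] at hp2
    refine ⟨[k,j,i,k] ++ p, ?_, ?_⟩
    · rw [comp_adj hAki.symm, comp_far hFij]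
      have hu2 : BEq u₂ ([j,k,i] ++ p) := hr1.trans (BEq.append_left [j,k] hp1)
      refine (BEq.append_left [k,i] hu2).trans ?_
      refine (swap_at hFij [k] (k::i::p)).trans ?_
      refine (braid_at hAki.symm [k,j] p).trans ?_
      exact braid_at hAkj [] (i::k::p)
    · rw [comp_adj hAkj.symm, comp_far hFij.symm]
      have ht : BEq t ([i,k,j] ++ p) := hq1.trans (BEq.append_left [i,k] hp2)
      refine (BEq.append_left [k,j] ht).trans ?_
      refine (swap_at hFij.symm [k] (k::j::p)).trans ?_
      refine (braid_at hAkj.symm [k,i] p).trans ?_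
      refine (braid_at hAki [] (j::k::p)).trans ?_
      exact swap_at hFij [i,k] (k::p)
  · -- Far k i
    rcases trichotomy k j with h' | hAkj | hFkj
    · exact absurd h'.symm hjk
    · -- case FA : Far k i, Adj k j
      rw [comp_far hFki] at hlen
      try simp only [List.cons_append, List.nil_append] at hlen
      rw [comp_far hFki, comp_adj hAkj] at h
      try simp only [List.cons_append, List.nil_append] at h
      obtain ⟨s, hs1, hs2⟩ := IH_beq IH (u := u₂) (v := k :: t) hlen h
      have hl2 : ((k : ℕ+) :: t : W).length ≤ L := by
        have := h.length
        simp only [List.length_cons, List.length_nil, List.cons_append, List.length_append] at hlen this ⊢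
        omega
      rcases trichotomy i j with h' | hAij | hFij
      · exact absurd h' hji
      · -- Adj i j
        rw [comp_adj hAij] at hs1; rw [comp_adj hAij.symm] at hs2
        obtain ⟨r, hr1, hr2⟩ := IH_beq IH (u := t) (v := j :: s) hl2 hs2
        rw [comp_far hFki] at hr1; rw [comp_far hFki.symm] at hr2
        have hl3 : ((j : ℕ+) :: s : W).length ≤ L := by
          have := hs2.length
          simp only [List.length_cons, List.length_nil, List.cons_append, List.length_append] at hl2 this ⊢
          omega
        obtain ⟨q, hq1, hq2⟩ := IH_beq IH hl3 hr2
        rw [comp_adj hAkj.symm] at hq1; rw [comp_adj hAkj] at hq2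
        refine ⟨[k,j,i] ++ q, ?_, ?_⟩
        · rw [comp_far hFki.symm, comp_adj hAij]
          have hu2 : BEq u₂ ([j,i,k,j] ++ q) := hs1.trans (BEq.append_left [j,i] hq1)
          refine (BEq.append_left [k] hu2).trans ?_
          refine (swap_at hFki.symm [k,j] (j::q)).trans ?_
          refine (braid_at hAkj [] (i::j::q)).trans ?_
          refine (braid_at hAij.symm [j,k] q).trans ?_
          exact swap_at hFki [j] (j::i::q)
        · rw [comp_adj hAkj.symm, comp_adj hAij.symm]
          have ht : BEq t ([i,j,k] ++ q) := hr1.trans (BEq.append_left [i] hq2)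
          refine (BEq.append_left [k,j] ht).trans ?_
          refine (braid_at hAij.symm [k] (k::q)).trans ?_
          refine (swap_at hFki [] (j::i::k::q)).trans ?_
          refine (swap_at hFki.symm [i,k,j] q).trans ?_
          exact braid_at hAkj [i] (i::q)
      · -- Far i j
        rw [comp_far hFij] at hs1; rw [comp_far hFij.symm] at hs2
        obtain ⟨r, hr1, hr2⟩ := IH_beq IH (u := t) (v := s) hl2 hs2
        rw [comp_far hFki] at hr1; rw [comp_far hFki.symm] at hr2
        refine ⟨[k,j] ++ r, ?_, ?_⟩
        · rw [comp_far hFki.symm, comp_far hFij]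
          have hu2 : BEq u₂ ([j,k] ++ r) := hs1.trans (BEq.append_left [j] hr2)
          refine (BEq.append_left [k] hu2).trans ?_
          exact braid_at hAkj [] r
        · rw [comp_adj hAkj.symm, comp_far hFij.symm]
          refine (BEq.append_left [k,j] hr1).trans ?_
          refine (swap_at hFij.symm [k] r).trans ?_
          exact swap_at hFki [] (j::r)
    · -- case FF : Far k i, Far k j
      rw [comp_far hFki] at hlen
      try simp only [List.cons_append, List.nil_append] at hlen
      rw [comp_far hFki, comp_far hFkj] at h
      try simp only [List.cons_append, List.nil_append] at h
      obtain ⟨s, hs1, hs2⟩ := IH_beq IH (u := u₂) (v := t) hlen h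
      rcases trichotomy i j with h' | hAij | hFij
      · exact absurd h' hji
      · -- Adj i j
        rw [comp_adj hAij] at hs1; rw [comp_adj hAij.symm] at hs2
        refine ⟨(k : ℕ+) :: s, ?_, ?_⟩
        · rw [comp_far hFki.symm, comp_adj hAij]
          refine (BEq.append_left [k] hs1).trans ?_
          refine (swap_at hFkj [] (i::s)).trans ?_
          exact swap_at hFki [j] s
        · rw [comp_far hFkj.symm, comp_adj hAij.symm]
          refine (BEq.append_left [k] hs2).trans ?_
          refine (swap_at hFki [] (j::s)).trans ?_
          exact swap_at hFkj [i] s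
      · -- Far i j
        rw [comp_far hFij] at hs1; rw [comp_far hFij.symm] at hs2
        refine ⟨(k : ℕ+) :: s, ?_, ?_⟩
        · rw [comp_far hFki.symm, comp_far hFij]
          refine (BEq.append_left [k] hs1).trans ?_
          exact swap_at hFkj [] s
        · rw [comp_far hFkj.symm, comp_far hFij.symm]
          refine (BEq.append_left [k] hs2).trans ?_
          exact swap_at hFki [] s

lemma cube (L : ℕ) (IH : IHty L) (i j k : ℕ+) (u₂ t : W) (hki : k ≠ i)
    (hlen : (comp k i ++ u₂).length ≤ L)
    (h : BEq (comp k i ++ u₂) (comp k j ++ t)) :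
    ∃ w, BEq (comp i k ++ u₂) (comp i j ++ w) ∧ BEq (comp j k ++ t) (comp j i ++ w) := by
  by_cases hside : Adj k i ∧ Far k j
  · have hkj : k ≠ j := hside.2.ne
    have hlen' : (comp k j ++ t).length ≤ L := by rw [← h.length]; exact hlen
    have hside' : ¬ (Adj k j ∧ Far k i) := fun hc => hc.1.not_far hside.2
    obtain ⟨w, h1, h2⟩ := cubeAsym L IH j i k t u₂ hkj hside' hlen' h.symm
    exact ⟨w, h2, h1⟩
  · exact cubeAsym L IH i j k u₂ t hki hside hlen h


lemma keyLemma : ∀ L N (i : ℕ+) (u : W) (j : ℕ+) (v : W), (i :: u : W).length ≤ L →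
    chainN N (i :: u) (j :: v) → ∃ w, BEq u (comp i j ++ w) ∧ BEq v (comp j i ++ w) := by
  intro L
  induction L with
  | zero => intro N i u j v hlen; simp at hlen
  | succ L ihL =>
    have IH : IHty L := fun i u j v hlen hbeq => by
      obtain ⟨N, hc⟩ := chainN_of_beq hbeq
      exact ihL N i u j v hlen hc
    intro N
    induction N with
    | zero =>
      intro i u j v hlen hc
      injection hc with h1 h2
      subst h1; subst h2
      exact ⟨u, by rw [comp_self, List.nil_append]; exact BEq.refl _, by rw [comp_self, List.nil_append]; exact BEq.refl _⟩
    | succ N ihN =>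
      intro i u j v hlen hc
      obtain ⟨b, hstep, hrest⟩ := hc
      rcases bstep_head hstep rfl with ⟨u', rfl, hstep'⟩ | ⟨k, u₂, hki, rfl, rfl⟩
      · obtain ⟨w, g1, g2⟩ := ihN i u' j v (by
          have := hstep'.length
          simp only [List.length_cons] at hlen ⊢
          omega) hrest
        exact ⟨w, (BEq.single hstep').trans g1, g2⟩
      · obtain ⟨t, g1, g2⟩ := ihN k (comp k i ++ u₂) j v (by
          have := comp_length i k
          simp only [List.length_cons, List.length_append] at hlen ⊢
          omega) hrest
        have hlen2 : (comp k i ++ u₂).length ≤ L := by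
          have := comp_length i k
          simp only [List.length_cons, List.length_append] at hlen ⊢
          omega
        obtain ⟨w, c1, c2⟩ := cube L IH i j k u₂ t hki hlen2 g1
        exact ⟨w, c1, g2.trans c2⟩

/-- head version of the lcm lemma for `BEq` -/
lemma head_pull {i j : ℕ+} {u v : W} (h : BEq (i :: u : W) (j :: v)) :
    ∃ w, BEq u (comp i j ++ w) ∧ BEq v (comp j i ++ w) := by
  obtain ⟨N, hc⟩ := chainN_of_beq h
  exact keyLemma (i :: u : W).length N i u j v le_rfl hc

/-- if `m` can be pulled to the front of `b ++ g` and `m ∉ b`, it can be pulled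
to the front of `g`. -/
lemma pull (m : ℕ+) : ∀ (b : W), m ∉ b → ∀ g d, BEq (b ++ g) (m :: d) → ∃ e, BEq g (m :: e) := by
  intro b
  induction b with
  | nil => intro _ g d h; exact ⟨d, h⟩
  | cons a b ih =>
    intro hm g d h
    simp only [List.mem_cons, not_or] at hm
    obtain ⟨w, h1, _⟩ := head_pull (show BEq ((a : ℕ+) :: (b ++ g)) (m :: d) from h)
    rcases trichotomy a m with h' | hA | hF
    · exact absurd h'.symm hm.1
    · rw [comp_adj hA] at h1
      try simp only [List.cons_append, List.nil_append] at h1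
      exact ih hm.2 g (a :: w) h1
    · rw [comp_far hF] at h1
      try simp only [List.cons_append, List.nil_append] at h1
      exact ih hm.2 g w h1

lemma BStep.rev {a b : W} (h : BStep a b) : BStep a.reverse b.reverse := by
  cases h with
  | braid i p s =>
    simpa [List.reverse_append] using BStep.braid i s.reverse p.reverse
  | braid' i p s =>
    simpa [List.reverse_append] using BStep.braid' i s.reverse p.reverse
  | comm i j h p s =>
    simpa [List.reverse_append] using BStep.comm' i j h s.reverse p.reverse
  | comm' i j h p s =>
    simpa [List.reverse_append] using BStep.comm i j h s.reverse p.reverse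

lemma BEq.rev {a b : W} (h : BEq a b) : BEq a.reverse b.reverse := by
  induction h with
  | refl => exact .refl _
  | tail _ h ih => exact ih.trans (BEq.single h.rev)

end BraidAux

/-- The defining relations of the positive braid monoid `MB_∞` on generators
`x i`, `i : ℕ+`: the braid relations and the far-commutation relations. -/
def BraidRel : FreeMonoid ℕ+ → FreeMonoid ℕ+ → Prop := fun a b =>
  (∃ i : ℕ+, a = FreeMonoid.of (i + 1) * FreeMonoid.of i * FreeMonoid.of (i + 1) ∧
      b = FreeMonoid.of i * FreeMonoid.of (i + 1) * FreeMonoid.of i) ∨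
  (∃ i j : ℕ+, i + 2 ≤ j ∧ a = FreeMonoid.of i * FreeMonoid.of j ∧
      b = FreeMonoid.of j * FreeMonoid.of i)

/-- The congruence generated by the braid relations. -/
def braidCon : Con (FreeMonoid ℕ+) := conGen BraidRel

/-- The positive braid monoid `MB_∞`. -/
abbrev MB : Type := braidCon.Quotient

/-- The generator `x_i` of `MB_∞`, for `i : ℕ+`. -/
def braidGen (i : ℕ+) : MB := braidCon.mk' (FreeMonoid.of i)

/-- The generator `x_i` of `MB_∞`, indexed by a natural number `i ≥ 1`
(junk value `x_1` for `i = 0`). -/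
def X (i : ℕ) : MB := braidGen ⟨max i 1, lt_of_lt_of_le one_pos (le_max_right i 1)⟩

/-- `x_i` divides `β`: `β = δ * x_i * ε` for some `δ ε ∈ MB_∞`. -/
def GenDvd (i : ℕ) (β : MB) : Prop := ∃ δ ε : MB, β = δ * X i * ε

/-- `x_i` left-divides `β`: `β = x_i * ε` for some `ε ∈ MB_∞`. -/
def GenDvdL (i : ℕ) (β : MB) : Prop := ∃ ε : MB, β = X i * ε

/-- `x_i` right-divides `β`: `β = δ * x_i` for some `δ ∈ MB_∞`. -/
def GenDvdR (i : ℕ) (β : MB) : Prop := ∃ δ : MB, β = δ * X i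

/-- The set `SB_n` of simple braids in `MB_n`: products of words in the
generators `x_1, …, x_{n-1}` in which each generator appears at most once. -/
def SB (n : ℕ) : Set MB :=
  {β | ∃ w : List ℕ, w.Nodup ∧ (∀ i ∈ w, 1 ≤ i ∧ i < n) ∧ β = (w.map X).prod}

/-- The simple centralizer `C_n(β)` of `β` in `SB_n`. -/
def C (n : ℕ) (β : MB) : Set MB := {γ ∈ SB n | β * γ = γ * β}

/-- `c_n(β)`, the cardinality of the simple centralizer `C_n(β)`. -/
noncomputable def c (n : ℕ) (β : MB) : ℕ := (C n β).ncard

namespace BraidAux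

/-- the congruence with underlying relation `BEq` -/
def BEqCon : Con (FreeMonoid ℕ+) where
  r := BEq
  iseqv := ⟨BEq.refl, BEq.symm, BEq.trans⟩
  mul' := fun h1 h2 => BEq.append h1 h2

lemma braidRel_beq {a b : FreeMonoid ℕ+} (h : BraidRel a b) : BEq a b := by
  rcases h with ⟨i, rfl, rfl⟩ | ⟨i, j, hij, rfl, rfl⟩
  · exact BEq.single (BStep.braid i [] [])
  · exact BEq.single (BStep.comm i j hij [] [])

lemma bstep_con {a b : W} (h : BStep a b) : braidCon a b := by
  have base : ∀ {x y : W}, BraidRel x y → ∀ (p s : W),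
      braidCon (p ++ (x ++ s)) (p ++ (y ++ s)) := fun hr p s =>
    braidCon.mul (braidCon.refl p)
      (braidCon.mul (ConGen.Rel.of _ _ hr) (braidCon.refl s))
  cases h with
  | braid i p s => exact base (Or.inl ⟨i, rfl, rfl⟩) p s
  | braid' i p s =>
    exact braidCon.symm (base (Or.inl ⟨i, rfl, rfl⟩) p s)
  | comm i j h p s => exact base (Or.inr ⟨i, j, h, rfl, rfl⟩) p s
  | comm' i j h p s =>
    exact braidCon.symm (base (Or.inr ⟨i, j, h, rfl, rfl⟩) p s)

lemma con_iff_beq {a b : FreeMonoid ℕ+} : braidCon a b ↔ BEq a b := by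
  constructor
  · intro h
    have hle : braidCon ≤ BEqCon := Con.conGen_le.2 fun x y hr => braidRel_beq hr
    exact hle h
  · intro h
    induction h with
    | refl => exact braidCon.refl _
    | tail _ hs ih => exact braidCon.trans ih (bstep_con hs)

end BraidAux

open BraidAux in
/-- Lemma 2.2 b): if `x_{n-1}` right-divides `γβ` and `x_{n-1}` does not divide
`β`, then `x_{n-1}` right-divides `γ`. -/
theorem right_dvd_of_right_dvd_mul (n : ℕ) (hn : 2 ≤ n) (β γ : MB)
    (h1 : GenDvdR (n - 1) (γ * β)) (h2 : ¬ GenDvd (n - 1) β) :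
    GenDvdR (n - 1) γ := by
  have hpos : 0 < n - 1 := by omega
  set m : ℕ+ := ⟨n - 1, hpos⟩ with hm
  have hmm : (⟨max (n - 1) 1, lt_of_lt_of_le one_pos (le_max_right (n - 1) 1)⟩ : ℕ+) = m := by
    apply Subtype.ext
    show max (n - 1) 1 = n - 1
    omega
  have hX : X (n - 1) = braidCon.mk' (FreeMonoid.of m) := by
    unfold X braidGen
    rw [hmm]
  obtain ⟨wβ, rfl⟩ := braidCon.mk'_surjective β
  obtain ⟨wγ, rfl⟩ := braidCon.mk'_surjective γ
  obtain ⟨δ, hδ⟩ := h1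
  obtain ⟨wδ, rfl⟩ := braidCon.mk'_surjective δ
  rw [hX] at hδ
  rw [← map_mul, ← map_mul] at hδ
  have hcon : braidCon (wγ * wβ) (wδ * FreeMonoid.of m) := braidCon.eq.mp hδ
  have hbeq : BEq (wγ.toList ++ wβ.toList) (wδ.toList ++ [m]) := con_iff_beq.mp hcon
  have hrev : BEq (wβ.toList.reverse ++ wγ.toList.reverse) (m :: wδ.toList.reverse) := by
    have h' := hbeq.rev
    rwa [List.reverse_append, List.reverse_append, List.reverse_cons, List.reverse_nil,
      List.nil_append, List.singleton_append] at h'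
  have hnot : m ∉ wβ.toList.reverse := by
    rw [List.mem_reverse]
    intro hmem
    obtain ⟨s, t, hsplit⟩ := List.append_of_mem hmem
    apply h2
    refine ⟨braidCon.mk' (FreeMonoid.ofList s), braidCon.mk' (FreeMonoid.ofList t), ?_⟩
    have hweq : wβ = FreeMonoid.ofList s * FreeMonoid.of m * FreeMonoid.ofList t := by
      apply FreeMonoid.toList.injective
      show wβ.toList = (s ++ [m]) ++ t
      rw [hsplit]
      simp
    rw [hX, hweq, map_mul, map_mul]
  obtain ⟨e, he⟩ := pull m wβ.toList.reverse hnot wγ.toList.reverse wδ.toList.reverse hrev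
  have hγ : BEq wγ.toList (e.reverse ++ [m]) := by
    have h' := he.rev
    rwa [List.reverse_reverse, List.reverse_cons] at h'
  refine ⟨braidCon.mk' (FreeMonoid.ofList e.reverse), ?_⟩
  rw [hX, ← map_mul]
  exact braidCon.eq.mpr (con_iff_beq.mpr hγ)
end

section
/- Let n ≥ 2 and let β ∈ SB_n be a simple braid with x_{n−1} | β. Then either x_{n−1} right-divides β or x_{n−1} left-divides β, i.e., β = x_{n−1} ε for some ε ∈ MB_∞ or β = δ x_{n−1} for some δ ∈ MB_∞. -/
def OrProp := Prop

instance : Monoid OrProp where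
  one := False
  mul a b := a ∨ b
  mul_assoc a b c := propext or_assoc
  one_mul a := false_or a
  mul_one a := or_false a

def OrProp.Holds (p : OrProp) : Prop := p

lemma OrProp.holds_mul {a b : OrProp} : (a * b).Holds ↔ a.Holds ∨ b.Holds := Iff.rfl
lemma OrProp.not_holds_one : ¬ (1 : OrProp).Holds := id

def occFree (k : ℕ+) : FreeMonoid ℕ+ →* OrProp :=
  FreeMonoid.lift (fun i => ((i = k : Prop) : OrProp))

lemma occFree_rel (k : ℕ+) {a b : FreeMonoid ℕ+} (h : BraidRel a b) :
    occFree k a = occFree k b := by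
  rcases h with ⟨i, ha, hb⟩ | ⟨i, j, hij, ha, hb⟩ <;> subst ha <;> subst hb <;>
    simp only [map_mul, occFree, FreeMonoid.lift_eval_of]
  · show (((i + 1 = k) ∨ (i = k)) ∨ (i + 1 = k) : Prop) = (((i = k) ∨ (i + 1 = k)) ∨ (i = k) : Prop)
    exact propext (by tauto)
  · show (((i = k) ∨ (j = k)) : Prop) = (((j = k) ∨ (i = k)) : Prop)
    exact propext (by tauto)

def occ (k : ℕ+) : MB →* OrProp :=
  braidCon.lift (occFree k) (by
    rw [braidCon]
    apply Con.conGen_le.mpr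
    intro a b h
    rw [Con.ker_rel]
    exact occFree_rel k h)

lemma occ_gen (k i : ℕ+) : occ k (braidGen i) = ((i = k : Prop) : OrProp) := by
  show occ k (braidCon.mk' (FreeMonoid.of i)) = _
  rw [occ, Con.lift_mk']
  exact FreeMonoid.lift_eval_of _ _

lemma occ_prod_holds (k : ℕ+) : ∀ (w : List ℕ),
    (occ k ((w.map X).prod)).Holds → ∃ i ∈ w, max i 1 = (k : ℕ) := by
  intro w
  induction w with
  | nil =>
    intro h
    simp only [List.map_nil, List.prod_nil, map_one] at h
    exact absurd h OrProp.not_holds_one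
  | cons i t ih =>
    intro h
    simp only [List.map_cons, List.prod_cons, map_mul] at h
    rcases OrProp.holds_mul.mp h with h | h
    · rw [show occ k (X i) = (((⟨max i 1, lt_of_lt_of_le one_pos (le_max_right i 1)⟩ : ℕ+) = k : Prop) : OrProp) from occ_gen k _] at h
      exact ⟨i, List.mem_cons_self, congrArg PNat.val h⟩
    · obtain ⟨j, hj, hjk⟩ := ih h
      exact ⟨j, List.mem_cons_of_mem _ hj, hjk⟩

lemma X_comm {a b : ℕ} (ha : 1 ≤ a) (hab : a + 2 ≤ b) : X a * X b = X b * X a := by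
  simp only [X, braidGen]
  rw [← map_mul, ← map_mul]
  refine (Con.eq braidCon).mpr (ConGen.Rel.of _ _ (Or.inr ⟨_, _, ?_, rfl, rfl⟩))
  apply (PNat.coe_le_coe _ _).mp
  push_cast
  show a ⊔ 1 + 2 ≤ b ⊔ 1
  omega

/-- Lemma 2.3: if `β ∈ SB_n` and `x_{n-1} ∣ β`, then `x_{n-1}` left-divides or
right-divides `β`. -/
theorem gen_dvd_simple_left_or_right (n : ℕ) (hn : 2 ≤ n) (β : MB) (hβ : β ∈ SB n)
    (h : GenDvd (n - 1) β) :
    GenDvdL (n - 1) β ∨ GenDvdR (n - 1) β := by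
  obtain ⟨w, hnd, hbounds, hβw⟩ := hβ
  set k : ℕ+ := ⟨n - 1, by omega⟩ with hk
  have hXk : occ k (X (n - 1)) = ((True : Prop) : OrProp) := by
    rw [show occ k (X (n - 1)) = (((⟨max (n - 1) 1, lt_of_lt_of_le one_pos (le_max_right (n-1) 1)⟩ : ℕ+) = k : Prop) : OrProp) from occ_gen k _]
    have : (⟨max (n - 1) 1, lt_of_lt_of_le one_pos (le_max_right (n-1) 1)⟩ : ℕ+) = k := by
      apply Subtype.ext
      show max (n - 1) 1 = n - 1
      omega
    exact propext (iff_true_intro this)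
  have hdvd : (occ k β).Holds := by
    obtain ⟨δ, ε, hde⟩ := h
    rw [hde, map_mul, map_mul]
    refine OrProp.holds_mul.mpr (Or.inl (OrProp.holds_mul.mpr (Or.inr ?_)))
    rw [hXk]
    exact trivial
  have hmem : n - 1 ∈ w := by
    rw [hβw] at hdvd
    obtain ⟨i, hi, hmax⟩ := occ_prod_holds k w hdvd
    have h1 := (hbounds i hi).1
    have : i = n - 1 := by
      have : (k : ℕ) = n - 1 := rfl
      omega
    rwa [← this]
  obtain ⟨u, v, huv⟩ := List.append_of_mem hmem
  subst huv
  rw [List.nodup_append] at hnd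
  obtain ⟨hu, hv, hdisj⟩ := hnd
  have hn1u : (n - 1) ∉ u := fun hc => (hdisj (n - 1) hc (n - 1) List.mem_cons_self rfl)
  have hn1v : (n - 1) ∉ v := (List.nodup_cons.mp hv).1
  have hprod : β = (u.map X).prod * (X (n - 1) * (v.map X).prod) := by
    rw [hβw]
    simp [List.prod_append]
  by_cases hmem2 : (n - 2) ∈ v
  · -- x_{n-1} commutes with everything in u
    left
    have hcomm : Commute (X (n - 1)) (u.map X).prod := by
      apply Commute.list_prod_right
      intro x hx
      obtain ⟨j, hj, rfl⟩ := List.mem_map.mp hx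
      have hb := hbounds j (List.mem_append_left _ hj)
      have hjn2 : j ≠ n - 2 := fun hc => hdisj j hj j (List.mem_cons_of_mem _ (hc ▸ hmem2)) rfl
      have hjn1 : j ≠ n - 1 := fun hc => hn1u (hc ▸ hj)
      exact (X_comm hb.1 (by omega)).symm
    exact ⟨(u.map X).prod * (v.map X).prod, by
      rw [hprod, ← mul_assoc, ← hcomm.eq, mul_assoc]⟩
  · -- x_{n-1} commutes with everything in v
    right
    have hcomm : Commute (X (n - 1)) (v.map X).prod := by
      apply Commute.list_prod_right
      intro x hx
      obtain ⟨j, hj, rfl⟩ := List.mem_map.mp hx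
      have hb := hbounds j (List.mem_append_right _ (List.mem_cons_of_mem _ hj))
      have hjn2 : j ≠ n - 2 := fun hc => hmem2 (hc ▸ hj)
      have hjn1 : j ≠ n - 1 := fun hc => hn1v (hc ▸ hj)
      exact (X_comm hb.1 (by omega)).symm
    exact ⟨(u.map X).prod * (v.map X).prod, by
      rw [hprod, hcomm.eq, ← mul_assoc]⟩
end

section
/- Let n ≥ 2, let β ∈ SB_n be a simple braid with x_{n−1} | β, and let α ∈ SB_{n+1} be a simple braid with x_n | α. Then β and α do not commute: βα ≠ αβ. -/
/-! ### Auxiliary: the permutation representation -/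

def sw (i : ℕ) : Equiv.Perm ℕ := Equiv.swap i (i+1)

lemma sw_apply (i x : ℕ) : sw i x = if x = i then i+1 else if x = i+1 then i else x := by
  simp [sw, Equiv.swap_apply_def]

lemma sw_braid (i : ℕ) : sw (i+1) * sw i * sw (i+1) = sw i * sw (i+1) * sw i := by
  ext x; simp only [Equiv.Perm.mul_apply, sw_apply]; split_ifs <;> omega

lemma sw_comm (i j : ℕ) (h : i + 2 ≤ j) : sw i * sw j = sw j * sw i := by
  ext x; simp only [Equiv.Perm.mul_apply, sw_apply]; split_ifs <;> omega

def permHom : MB →* Equiv.Perm ℕ :=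
  braidCon.lift (FreeMonoid.lift fun i : ℕ+ => sw i) (by
    apply Con.conGen_le.mpr
    rintro a b (⟨i, rfl, rfl⟩ | ⟨i, j, hij, rfl, rfl⟩) <;>
      simp only [Con.ker_rel, map_mul, FreeMonoid.lift_eval_of]
    · have : ((i + 1 : ℕ+) : ℕ) = (i : ℕ) + 1 := by push_cast; ring
      rw [this]; exact sw_braid i
    · have h2 : ((i : ℕ)) + 2 ≤ (j : ℕ) := by exact_mod_cast hij
      exact sw_comm i j h2)

lemma permHom_X (i : ℕ) : permHom (X i) = sw (max i 1) := by
  simp [permHom, X, braidGen, Con.lift_mk', FreeMonoid.lift_eval_of]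
  exact FreeMonoid.lift_eval_of _ _

lemma permHom_prod (w : List ℕ) (hw : ∀ i ∈ w, 1 ≤ i) :
    permHom ((w.map X).prod) = (w.map sw).prod := by
  rw [map_list_prod, List.map_map]
  congr 1
  apply List.map_congr_left
  intro i hi
  simp only [Function.comp_apply, permHom_X, max_eq_left (hw i hi)]

/-- A product of `sw i`'s with all `i ≤ L` fixes every `k ≥ L + 2` and maps
`{0, …, L+1}` into itself. -/
lemma prod_sw_bounds (L : ℕ) (l : List ℕ) (hl : ∀ i ∈ l, i ≤ L) :
    (∀ k, L + 2 ≤ k → ((l.map sw).prod) k = k) ∧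
      (∀ k, k ≤ L + 1 → ((l.map sw).prod) k ≤ L + 1) := by
  induction l with
  | nil => simp
  | cons a t ih =>
    obtain ⟨ih1, ih2⟩ := ih (fun i hi => hl i (List.mem_cons_of_mem a hi))
    have ha : a ≤ L := hl a List.mem_cons_self
    simp only [List.map_cons, List.prod_cons, Equiv.Perm.mul_apply]
    constructor
    · intro k hk
      rw [ih1 k hk, sw_apply]
      split_ifs <;> omega
    · intro k hk
      have := ih2 k hk
      rw [sw_apply]
      split_ifs <;> omega

/-! ### Auxiliary: the bubble-sort representation -/

def bub (i : ℕ) : Function.End (ℕ → ℕ) :=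
  fun f x => if x = i then max (f i) (f (i+1)) else if x = i+1 then min (f i) (f (i+1)) else f x

lemma bub_self (i : ℕ) (f : ℕ → ℕ) : bub i f i = max (f i) (f (i+1)) := by simp [bub]
lemma bub_succ (i : ℕ) (f : ℕ → ℕ) : bub i f (i+1) = min (f i) (f (i+1)) := by simp [bub]
lemma bub_ne (i : ℕ) (f : ℕ → ℕ) (x : ℕ) (h1 : x ≠ i) (h2 : x ≠ i + 1) : bub i f x = f x := by
  simp [bub, h1, h2]

lemma bub_mul_apply (p q : Function.End (ℕ → ℕ)) (f : ℕ → ℕ) : (p * q) f = p (q f) := rfl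

lemma bub_braid (i : ℕ) : bub (i+1) * bub i * bub (i+1) = bub i * bub (i+1) * bub i := by
  funext f x
  show bub (i+1) (bub i (bub (i+1) f)) x = bub i (bub (i+1) (bub i f)) x
  by_cases h1 : x = i
  · subst h1; simp only [bub]; split_ifs <;> omega
  · by_cases h2 : x = i + 1
    · subst h2; simp only [bub]; split_ifs <;> omega
    · by_cases h3 : x = i + 2
      · subst h3; simp only [bub]; split_ifs <;> omega
      · simp only [bub]; split_ifs <;> omega

lemma bub_comm (i j : ℕ) (h : i + 2 ≤ j) : bub i * bub j = bub j * bub i := by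
  funext f x
  show bub i (bub j f) x = bub j (bub i f) x
  by_cases h1 : x = i
  · subst h1; simp only [bub]; split_ifs <;> omega
  · by_cases h2 : x = i + 1
    · subst h2; simp only [bub]; split_ifs <;> omega
    · by_cases h3 : x = j
      · subst h3; simp only [bub]; split_ifs <;> omega
      · by_cases h4 : x = j + 1
        · subst h4; simp only [bub]; split_ifs <;> omega
        · simp only [bub]; split_ifs <;> omega

def bubHom : MB →* Function.End (ℕ → ℕ) :=
  braidCon.lift (FreeMonoid.lift fun i : ℕ+ => bub i) (by
    apply Con.conGen_le.mpr
    rintro a b (⟨i, rfl, rfl⟩ | ⟨i, j, hij, rfl, rfl⟩) <;>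
      simp only [Con.ker_rel, map_mul, FreeMonoid.lift_eval_of]
    · have : ((i + 1 : ℕ+) : ℕ) = (i : ℕ) + 1 := by push_cast; ring
      rw [this]; exact bub_braid i
    · have h2 : ((i : ℕ)) + 2 ≤ (j : ℕ) := by exact_mod_cast hij
      exact bub_comm i j h2)

lemma bubHom_X (i : ℕ) : bubHom (X i) = bub (max i 1) := by
  simp [bubHom, X, braidGen, Con.lift_mk', FreeMonoid.lift_eval_of]
  exact FreeMonoid.lift_eval_of _ _

/-- Any property of functions preserved by every `bub i` is preserved by `bubHom g`. -/
lemma bubHom_pres (Q : (ℕ → ℕ) → Prop) (hQ : ∀ i : ℕ, ∀ f, Q f → Q (bub i f))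
    (g : MB) (f : ℕ → ℕ) (hf : Q f) : Q (bubHom g f) := by
  obtain ⟨w, rfl⟩ := Con.mk'_surjective g
  have : bubHom (braidCon.mk' w) = FreeMonoid.lift (fun i : ℕ+ => bub i) w :=
    Con.lift_mk' _ _
  rw [this, FreeMonoid.lift_apply]
  induction w.toList generalizing f with
  | nil => exact hf
  | cons a t ih =>
    simp only [List.map_cons, List.prod_cons, bub_mul_apply]
    exact hQ a _ (ih f hf)

def CrossInv (m : ℕ) (f : ℕ → ℕ) : Prop := ∃ p q, p ≤ m ∧ m < q ∧ f q < f p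

lemma bub_inj (i : ℕ) (f : ℕ → ℕ) (hf : Function.Injective f) :
    Function.Injective (bub i f) := by
  rcases le_total (f (i+1)) (f i) with h | h
  · have : bub i f = f := by
      funext x
      by_cases h1 : x = i
      · subst h1; rw [bub_self, max_eq_left h]
      · by_cases h2 : x = i + 1
        · subst h2; rw [bub_succ, min_eq_right h]
        · rw [bub_ne _ _ _ h1 h2]
    rw [this]; exact hf
  · have : bub i f = f ∘ (Equiv.swap i (i+1)) := by
      funext x
      by_cases h1 : x = i
      · subst h1
        simp only [Function.comp_apply, Equiv.swap_apply_left]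
        rw [bub_self, max_eq_right h]
      · by_cases h2 : x = i + 1
        · subst h2
          simp only [Function.comp_apply, Equiv.swap_apply_right]
          rw [bub_succ, min_eq_left h]
        · rw [bub_ne _ _ _ h1 h2]
          simp [Function.comp_apply, Equiv.swap_apply_of_ne_of_ne h1 h2]
    rw [this]
    exact hf.comp (Equiv.swap i (i+1)).injective

lemma bub_crossInv (m i : ℕ) (f : ℕ → ℕ) (h : CrossInv m f) : CrossInv m (bub i f) := by
  obtain ⟨p, q, hp, hq, hlt⟩ := h
  by_cases hpi : p = i
  · have hfp : f p = f i := by rw [hpi]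
    by_cases hqi : q = i + 1
    · have hfq : f q = f (i+1) := by rw [hqi]
      exact ⟨i, i+1, hpi ▸ hp, hqi ▸ hq, by rw [bub_self, bub_succ]; omega⟩
    · refine ⟨i, q, hpi ▸ hp, hq, ?_⟩
      rw [bub_self, bub_ne _ _ _ (by omega) hqi]
      omega
  · by_cases hpi1 : p = i + 1
    · have hfp : f p = f (i+1) := by rw [hpi1]
      have hqn : q ≠ i := by omega
      by_cases hqi1 : q = i + 1
      · omega
      · refine ⟨i, q, by omega, hq, ?_⟩
        rw [bub_self, bub_ne _ _ _ hqn hqi1]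
        omega
    · have hbp : bub i f p = f p := bub_ne _ _ _ hpi hpi1
      by_cases hqi : q = i
      · have hfq : f q = f i := by rw [hqi]
        refine ⟨p, i+1, hp, by omega, ?_⟩
        rw [bub_succ, hbp]
        omega
      · by_cases hqi1 : q = i + 1
        · have hfq : f q = f (i+1) := by rw [hqi1]
          refine ⟨p, i+1, hp, hqi1 ▸ hq, ?_⟩
          rw [bub_succ, hbp]
          omega
        · exact ⟨p, q, hp, hq, by rw [bub_ne _ _ _ hqi hqi1, hbp]; exact hlt⟩

lemma bub_create (m : ℕ) (f : ℕ → ℕ) (hf : Function.Injective f) : CrossInv m (bub m f) := by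
  refine ⟨m, m+1, le_refl m, Nat.lt_succ_self m, ?_⟩
  rw [bub_self, bub_succ]
  have hne : f m ≠ f (m+1) := fun h => by have := hf h; omega
  omega

/-- Key step 1: if `x_m` divides a product of simple generators with indices in
`[1, m]`, then the index `m` actually occurs in the word. -/
lemma mem_of_genDvd (m : ℕ) (hm : 1 ≤ m) (w : List ℕ) (hwb : ∀ i ∈ w, 1 ≤ i ∧ i ≤ m)
    (h : GenDvd m ((w.map X).prod)) : m ∈ w := by
  by_contra hnm
  obtain ⟨δ, ε, heq⟩ := h
  -- the Q-invariant side: all letters are < m, so the bubble image of `id` has no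
  -- crossing inversion at `m`.
  set F := bubHom ((w.map X).prod) id with hF
  have hQ : (∀ k, m < k → F k = k) ∧ (∀ k, k ≤ m → F k ≤ m) := by
    rw [hF, map_list_prod, List.map_map]
    have : ∀ i ∈ w, (bubHom ∘ X) i = bub i := by
      intro i hi
      simp only [Function.comp_apply, bubHom_X, max_eq_left (hwb i hi).1]
    rw [List.map_congr_left this]
    have key : ∀ (l : List ℕ), (∀ i ∈ l, 1 ≤ i ∧ i < m) → ∀ f : ℕ → ℕ,
        ((∀ k, m < k → f k = k) ∧ (∀ k, k ≤ m → f k ≤ m)) →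
        ((∀ k, m < k → ((l.map bub).prod) f k = k) ∧
          (∀ k, k ≤ m → ((l.map bub).prod) f k ≤ m)) := by
      intro l hl
      induction l with
      | nil => intro f hf; exact hf
      | cons a t ih =>
        intro f hf
        have ha : 1 ≤ a ∧ a < m := hl a List.mem_cons_self
        simp only [List.map_cons, List.prod_cons, bub_mul_apply]
        obtain ⟨ih1, ih2⟩ := ih (fun i hi => hl i (List.mem_cons_of_mem a hi)) f hf
        constructor
        · intro k hk
          rw [bub_ne _ _ _ (by omega) (by omega)]
          exact ih1 k hk
        · intro k hk
          by_cases h1 : k = a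
          · rw [h1, bub_self]
            have := ih2 a (by omega)
            have := ih2 (a+1) (by omega)
            omega
          · by_cases h2 : k = a + 1
            · rw [h2, bub_succ]
              have := ih2 a (by omega)
              have := ih2 (a+1) (by omega)
              omega
            · rw [bub_ne _ _ _ h1 h2]
              exact ih2 k hk
    have hwb' : ∀ i ∈ w, 1 ≤ i ∧ i < m := by
      intro i hi
      have := hwb i hi
      have : i ≠ m := fun h => hnm (h ▸ hi)
      have := hwb i hi
      omega
    exact key w hwb' id ⟨fun k _ => rfl, fun k hk => hk⟩
  -- the CrossInv side: `x_m` divides the braid, so the bubble image of `id`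
  -- has a crossing inversion at `m`.
  have hP : CrossInv m F := by
    rw [hF, heq, map_mul, map_mul, bub_mul_apply, bub_mul_apply, bubHom_X,
      max_eq_left hm]
    have hinj : Function.Injective (bubHom ε id) :=
      bubHom_pres Function.Injective bub_inj ε id Function.injective_id
    exact bubHom_pres (CrossInv m) (fun i f hf => bub_crossInv m i f hf) δ _
      (bub_create m _ hinj)
  obtain ⟨p, q, hp, hq, hlt⟩ := hP
  have h1 := hQ.1 q hq
  have h2 := hQ.2 p hp
  omega

/-- Lemma 2.4: if `β ∈ SB_n` with `x_{n-1} ∣ β` and `α ∈ SB_{n+1}` with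
`x_n ∣ α`, then `β` and `α` do not commute. -/
theorem consecutive_simple_not_commute (n : ℕ) (hn : 2 ≤ n) (β : MB) (hβ : β ∈ SB n)
    (hβd : GenDvd (n - 1) β) (α : MB) (hα : α ∈ SB (n + 1)) (hαd : GenDvd n α) :
    β * α ≠ α * β := by
  intro hcomm
  obtain ⟨w, hwnd, hwb, hβe⟩ := hβ
  obtain ⟨u, hund, hub, hαe⟩ := hα
  subst hβe hαe
  -- step 1: the extreme letters occur in the words
  have hwmem : n - 1 ∈ w :=
    mem_of_genDvd (n-1) (by omega) w
      (fun i hi => ⟨(hwb i hi).1, by have := (hwb i hi).2; omega⟩) hβd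
  have humem : n ∈ u :=
    mem_of_genDvd n (by omega) u
      (fun i hi => ⟨(hub i hi).1, by have := (hub i hi).2; omega⟩) hαd
  -- step 2: split the words
  obtain ⟨w₁, w₂, hwsplit⟩ := List.append_of_mem hwmem
  obtain ⟨u₁, u₂, husplit⟩ := List.append_of_mem humem
  subst hwsplit husplit
  -- nodup consequences
  rw [List.nodup_append] at hwnd hund
  have hw₁ : n - 1 ∉ w₁ := fun h => hwnd.2.2 _ h _ List.mem_cons_self rfl
  have hw₂ : n - 1 ∉ w₂ := fun h => (List.nodup_cons.mp hwnd.2.1).1 h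
  have hu₁n : n ∉ u₁ := fun h => hund.2.2 _ h _ List.mem_cons_self rfl
  have hu₂n : n ∉ u₂ := fun h => (List.nodup_cons.mp hund.2.1).1 h
  -- various entry bounds
  have hw₁b : ∀ i ∈ w₁, i ≤ n - 2 := by
    intro i hi
    have h1 := (hwb i (by simp [hi])).2
    have h2 : i ≠ n - 1 := fun h => hw₁ (h ▸ hi)
    omega
  have hw₂b : ∀ i ∈ w₂, i ≤ n - 2 := by
    intro i hi
    have h1 := (hwb i (by simp [hi])).2
    have h2 : i ≠ n - 1 := fun h => hw₂ (h ▸ hi)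
    omega
  have hu₁b : ∀ i ∈ u₁, i ≤ n - 1 := by
    intro i hi
    have h1 := (hub i (by simp [hi])).2
    have h2 : i ≠ n := fun h => hu₁n (h ▸ hi)
    omega
  have hu₂b : ∀ i ∈ u₂, i ≤ n - 1 := by
    intro i hi
    have h1 := (hub i (by simp [hi])).2
    have h2 : i ≠ n := fun h => hu₂n (h ▸ hi)
    omega
  -- permutations
  have hw1 : ∀ i ∈ w₁ ++ (n-1) :: w₂, 1 ≤ i := fun i hi => (hwb i hi).1
  have hu1 : ∀ i ∈ u₁ ++ n :: u₂, 1 ≤ i := fun i hi => (hub i hi).1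
  set σβ := permHom (((w₁ ++ (n-1) :: w₂).map X).prod) with hσβ
  set σα := permHom (((u₁ ++ n :: u₂).map X).prod) with hσα
  have hσβe : σβ = (w₁.map sw).prod * (sw (n-1) * (w₂.map sw).prod) := by
    rw [hσβ, permHom_prod _ hw1, List.map_append, List.prod_append, List.map_cons,
      List.prod_cons]
  have hσαe : σα = (u₁.map sw).prod * (sw n * (u₂.map sw).prod) := by
    rw [hσα, permHom_prod _ hu1, List.map_append, List.prod_append, List.map_cons,
      List.prod_cons]
  obtain ⟨hw₁fix, hw₁bd⟩ := prod_sw_bounds (n-2) w₁ hw₁b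
  obtain ⟨hw₂fix, hw₂bd⟩ := prod_sw_bounds (n-2) w₂ hw₂b
  obtain ⟨hu₁fix, hu₁bd⟩ := prod_sw_bounds (n-1) u₁ hu₁b
  obtain ⟨hu₂fix, hu₂bd⟩ := prod_sw_bounds (n-1) u₂ hu₂b
  -- σβ n < n
  have hβn : σβ n < n := by
    rw [hσβe, Equiv.Perm.mul_apply, Equiv.Perm.mul_apply]
    rw [hw₂fix n (by omega), sw_apply]
    have hn1 : n ≠ n - 1 := by omega
    rw [if_neg hn1, if_pos (by omega)]
    have := hw₁bd (n-1) (by omega)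
    omega
  -- σβ (n+1) = n+1
  have hβn1 : σβ (n+1) = n + 1 := by
    rw [hσβe, Equiv.Perm.mul_apply, Equiv.Perm.mul_apply]
    rw [hw₂fix (n+1) (by omega), sw_apply]
    rw [if_neg (by omega), if_neg (by omega)]
    exact hw₁fix (n+1) (by omega)
  -- the commuting equation for permutations
  have hcommP : σβ * σα = σα * σβ := by
    rw [hσβ, hσα, ← map_mul, ← map_mul, hcomm]
  by_cases hcase : n - 1 ∈ u₁
  · -- then n-1 ∉ u₂, so σα n = n + 1
    have hu₂b' : ∀ i ∈ u₂, i ≤ n - 2 := by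
      intro i hi
      have h1 := hu₂b i hi
      have h2 : i ≠ n - 1 := by
        intro h
        exact hund.2.2 (n-1) hcase (n-1) (by simp [h ▸ hi]) rfl
      omega
    obtain ⟨hu₂fix', _⟩ := prod_sw_bounds (n-2) u₂ hu₂b'
    have hαn : σα n = n + 1 := by
      rw [hσαe, Equiv.Perm.mul_apply, Equiv.Perm.mul_apply]
      rw [hu₂fix' n (by omega), sw_apply, if_pos rfl]
      exact hu₁fix (n+1) (by omega)
    have := congrArg (fun σ : Equiv.Perm ℕ => σ n) hcommP
    simp only [Equiv.Perm.mul_apply] at this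
    -- σβ (σα n) = σα (σβ n), i.e. σβ (n+1) = σα (σβ n)
    rw [hαn, hβn1] at this
    -- n+1 = σα (σβ n); but σα n = n+1 and σα injective, so σβ n = n
    have : σβ n = n := σα.injective (by rw [hαn, ← this])
    omega
  · -- then n-1 ∉ u₁, so σα (n+1) = n
    have hu₁b' : ∀ i ∈ u₁, i ≤ n - 2 := by
      intro i hi
      have h1 := hu₁b i hi
      have h2 : i ≠ n - 1 := fun h => hcase (h ▸ hi)
      omega
    obtain ⟨hu₁fix', _⟩ := prod_sw_bounds (n-2) u₁ hu₁b'
    have hαn1 : σα (n+1) = n := by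
      rw [hσαe, Equiv.Perm.mul_apply, Equiv.Perm.mul_apply]
      rw [hu₂fix (n+1) (by omega), sw_apply]
      rw [if_neg (by omega), if_pos rfl]
      exact hu₁fix' n (by omega)
    have := congrArg (fun σ : Equiv.Perm ℕ => σ (n+1)) hcommP
    simp only [Equiv.Perm.mul_apply] at this
    -- σβ (σα (n+1)) = σα (σβ (n+1))
    rw [hαn1, hβn1, hαn1] at this
    -- σβ n = n
    omega
end

section
/- For all n ≥ 3, the simple centralizer of x_{n−1} in SB_n has cardinality c_n(x_{n−1}) = 2 · F_{2n−5}. -/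
/-! ### permutation side -/

/-- the transposition `(i, i+1)` -/
def S' (i : ℕ) : Equiv.Perm ℕ := Equiv.swap i (i+1)

lemma S'_comm {i j : ℕ} (h : i + 2 ≤ j) : S' i * S' j = S' j * S' i := by
  ext x
  simp only [S', Equiv.Perm.mul_apply, Equiv.swap_apply_def]
  split_ifs <;> omega

lemma S'_braid (i : ℕ) : S' (i+1) * S' i * S' (i+1) = S' i * S' (i+1) * S' i := by
  ext x
  simp only [S', Equiv.Perm.mul_apply, Equiv.swap_apply_def]
  split_ifs <;> omega

/-- the homomorphism from `MB` to permutations of `ℕ` -/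
def phi : MB →* Equiv.Perm ℕ :=
  braidCon.lift (FreeMonoid.lift fun i : ℕ+ => S' (i : ℕ)) (by
    apply Con.conGen_le.mpr
    rintro a b (⟨i, rfl, rfl⟩ | ⟨i, j, hij, rfl, rfl⟩) <;>
      simp only [Con.ker_rel, map_mul, FreeMonoid.lift_eval_of, PNat.add_coe, PNat.val_ofNat,
        PNat.one_coe]
    · exact S'_braid (i : ℕ)
    · exact S'_comm (by exact_mod_cast hij))

lemma phi_X {i : ℕ} (hi : 1 ≤ i) : phi (X i) = S' i := by
  have : (⟨max i 1, lt_of_lt_of_le one_pos (le_max_right i 1)⟩ : ℕ+) = (⟨i, hi⟩ : ℕ+) := by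
    ext; simp [Nat.max_eq_left hi]
  unfold X braidGen
  rw [this]
  rfl

/-! ### words -/

/-- permutation of a word -/
def sg (w : List ℕ) : Equiv.Perm ℕ := (w.map S').prod

/-- braid of a word -/
def Pw (w : List ℕ) : MB := (w.map X).prod

@[simp] lemma sg_nil : sg [] = 1 := rfl
@[simp] lemma Pw_nil : Pw [] = 1 := rfl
@[simp] lemma sg_cons (a : ℕ) (w : List ℕ) : sg (a :: w) = S' a * sg w := by
  simp [sg]
@[simp] lemma Pw_cons (a : ℕ) (w : List ℕ) : Pw (a :: w) = X a * Pw w := by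
  simp [Pw]
@[simp] lemma sg_append (u v : List ℕ) : sg (u ++ v) = sg u * sg v := by
  simp [sg]
@[simp] lemma Pw_append (u v : List ℕ) : Pw (u ++ v) = Pw u * Pw v := by
  simp [Pw]
@[simp] lemma Pw_singleton (a : ℕ) : Pw [a] = X a := by simp [Pw]
@[simp] lemma sg_singleton (a : ℕ) : sg [a] = S' a := by simp [sg]

lemma phi_Pw {w : List ℕ} (hw : ∀ a ∈ w, 1 ≤ a) : phi (Pw w) = sg w := by
  induction w with
  | nil => simp
  | cons a w ih =>
    simp only [Pw_cons, sg_cons, map_mul, phi_X (hw a (List.mem_cons_self)),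
      ih fun b hb => hw b (List.mem_cons_of_mem a hb)]

lemma X_comm_s12 {i j : ℕ} (hi : 1 ≤ i) (hij : i + 2 ≤ j) : X i * X j = X j * X i := by
  have hj : 1 ≤ j := by omega
  have hmi : (⟨max i 1, lt_of_lt_of_le one_pos (le_max_right i 1)⟩ : ℕ+) = (⟨i, hi⟩ : ℕ+) := by
    ext; simp [Nat.max_eq_left hi]
  have hmj : (⟨max j 1, lt_of_lt_of_le one_pos (le_max_right j 1)⟩ : ℕ+) = (⟨j, hj⟩ : ℕ+) := by
    ext; simp [Nat.max_eq_left hj]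
  unfold X braidGen
  rw [hmi, hmj, ← map_mul, ← map_mul]
  exact braidCon.eq.mpr (ConGen.Rel.of _ _ (Or.inr ⟨⟨i, hi⟩, ⟨j, hj⟩, by
    exact (PNat.coe_le_coe (⟨i, hi⟩ + 2) ⟨j, hj⟩).mp (by
      simp only [PNat.add_coe, PNat.mk_coe, PNat.val_ofNat]; exact hij), rfl, rfl⟩))

/-- a generator commutes with a word in which every letter either far-commutes
with it or equals it -/
lemma X_comm_Pw {i : ℕ} (hi : 1 ≤ i) {w : List ℕ}
    (hw : ∀ a ∈ w, 1 ≤ a ∧ (a + 2 ≤ i ∨ i + 2 ≤ a ∨ a = i)) :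
    X i * Pw w = Pw w * X i := by
  induction w with
  | nil => simp
  | cons a w ih =>
    obtain ⟨ha1, ha2⟩ := hw a (List.mem_cons_self)
    have h1 : X i * X a = X a * X i := by
      rcases ha2 with h | h | h
      · exact (X_comm_s12 ha1 h).symm
      · exact X_comm_s12 hi h
      · rw [h]
    rw [Pw_cons, ← mul_assoc, h1, mul_assoc, ih fun b hb => hw b (List.mem_cons_of_mem a hb),
      mul_assoc]

/-- far commutation with a whole word, permutation level -/
lemma S'_comm_sg {m : ℕ} {w : List ℕ} (hw : ∀ a ∈ w, a + 2 ≤ m) :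
    S' m * sg w = sg w * S' m := by
  induction w with
  | nil => simp
  | cons a w ih =>
    rw [sg_cons, ← mul_assoc, ← S'_comm (hw a (List.mem_cons_self)), mul_assoc,
      ih fun b hb => hw b (List.mem_cons_of_mem a hb), mul_assoc]

/-! ### how boolean permutations act -/

lemma S'_apply_of_ne {i x : ℕ} (h1 : x ≠ i) (h2 : x ≠ i + 1) : S' i x = x :=
  Equiv.swap_apply_of_ne_of_ne h1 h2

/-- letters ≤ c: fixes everything ≥ c+2 -/
lemma sg_fix_high {w : List ℕ} {c : ℕ} (hw : ∀ a ∈ w, a ≤ c) {x : ℕ} (hx : c + 2 ≤ x) :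
    sg w x = x := by
  induction w with
  | nil => rfl
  | cons a w ih =>
    have ha := hw a (List.mem_cons_self)
    rw [sg_cons, Equiv.Perm.mul_apply, ih fun b hb => hw b (List.mem_cons_of_mem a hb)]
    exact S'_apply_of_ne (by omega) (by omega)

/-- letters ≤ c: preserves `{x | x ≤ c+1}` -/
lemma sg_le_of_le {w : List ℕ} {c : ℕ} (hw : ∀ a ∈ w, a ≤ c) {x : ℕ} (hx : x ≤ c + 1) :
    sg w x ≤ c + 1 := by
  induction w with
  | nil => exact hx
  | cons a w ih =>
    have ha := hw a (List.mem_cons_self)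
    have h2 := ih fun b hb => hw b (List.mem_cons_of_mem a hb)
    rw [sg_cons, Equiv.Perm.mul_apply]
    set y := sg w x with hy
    simp only [S', Equiv.swap_apply_def]
    split_ifs <;> omega

/-- letters ≠ c: preserves `{x | x ≤ c}` -/
lemma sg_avoid_le {w : List ℕ} {c : ℕ} (hw : ∀ a ∈ w, a ≠ c) {x : ℕ} (hx : x ≤ c) :
    sg w x ≤ c := by
  induction w with
  | nil => exact hx
  | cons a w ih =>
    have ha := hw a (List.mem_cons_self)
    have h2 := ih fun b hb => hw b (List.mem_cons_of_mem a hb)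
    rw [sg_cons, Equiv.Perm.mul_apply]
    simp only [S', Equiv.swap_apply_def]
    split_ifs <;> omega

/-- letters ≠ c: preserves `{x | c < x}` -/
lemma sg_avoid_gt {w : List ℕ} {c : ℕ} (hw : ∀ a ∈ w, a ≠ c) {x : ℕ} (hx : c < x) :
    c < sg w x := by
  induction w with
  | nil => exact hx
  | cons a w ih =>
    have ha := hw a (List.mem_cons_self)
    have h2 := ih fun b hb => hw b (List.mem_cons_of_mem a hb)
    rw [sg_cons, Equiv.Perm.mul_apply]
    simp only [S', Equiv.swap_apply_def]
    split_ifs <;> omega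

/-- a nodup word with maximal letter `c` present moves `c+1` down -/
lemma sg_contains_max {w : List ℕ} {c : ℕ} (hc1 : 1 ≤ c) (hnd : w.Nodup) (hc : c ∈ w)
    (hw : ∀ a ∈ w, a ≤ c) : sg w (c + 1) ≤ c := by
  obtain ⟨s, t, rfl⟩ := List.append_of_mem hc
  have hnds := List.Nodup.of_append_left hnd
  have hcs : c ∉ s := by
    have := List.disjoint_of_nodup_append hnd
    intro hmem
    exact this hmem (List.mem_cons_self)
  have hct : c ∉ t := by
    have := (List.nodup_cons.mp (List.Nodup.of_append_right hnd)).1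
    exact this
  have ht : sg t (c + 1) = c + 1 := by
    apply sg_fix_high (c := c - 1) _ (by omega)
    intro a ha
    have h1 := hw a (List.mem_append_right s (List.mem_cons_of_mem c ha))
    have h2 : a ≠ c := fun h => hct (by rwa [h] at ha)
    omega
  rw [sg_append, Equiv.Perm.mul_apply, sg_cons, Equiv.Perm.mul_apply, ht]
  have : S' c (c+1) = c := Equiv.swap_apply_right c (c+1)
  rw [this]
  exact sg_avoid_le (fun a ha h => hcs (by rwa [h] at ha)) le_rfl

/-! ### moving a descent to the end, and injectivity on square-free braids -/

lemma S'_apply_self (i : ℕ) : S' i i = i + 1 := Equiv.swap_apply_left i (i+1)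
lemma S'_apply_succ (i : ℕ) : S' i (i+1) = i := Equiv.swap_apply_right i (i+1)

lemma exists_last_letter : ∀ N (w : List ℕ) (j : ℕ), w.length ≤ N → w.Nodup →
    (∀ a ∈ w, 1 ≤ a) → 1 ≤ j → sg w (j+1) < sg w j →
    ∃ v : List ℕ, v.Nodup ∧ (∀ a ∈ v, a ∈ w) ∧ j ∉ v ∧ v.length + 1 = w.length ∧
      Pw w = Pw (v ++ [j]) := by
  intro N
  induction N with
  | zero =>
    intro w j hlen _ _ _ hdes
    have hw0 : w = [] := List.length_eq_zero_iff.mp (Nat.le_zero.mp hlen)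
    subst hw0
    simp at hdes
  | succ N ih =>
    intro w j hlen hnd hw hj hdes
    rcases w.eq_nil_or_concat with rfl | ⟨u, i, rfl⟩
    · simp at hdes
    rw [List.concat_eq_append] at *
    have hu : u.Nodup := List.Nodup.of_append_left hnd
    have hiu : i ∉ u := fun hmem =>
      (List.disjoint_of_nodup_append hnd) hmem (List.mem_singleton.mpr rfl)
    have hi1 : 1 ≤ i := (hw i (List.mem_append_right u (List.mem_singleton.mpr rfl)))
    have hne : ∀ a ∈ u, a ≠ i := fun a ha h => hiu (by rwa [h] at ha)
    have hlu : u.length ≤ N := by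
      simp only [List.length_append, List.length_singleton] at hlen; omega
    have heval : ∀ x, sg (u ++ [i]) x = sg u (S' i x) := by
      intro x; rw [sg_append, sg_singleton, Equiv.Perm.mul_apply]
    rcases eq_or_ne i j with rfl | hij
    · exact ⟨u, hu, fun a ha => List.mem_append_left _ ha, hiu, by simp, rfl⟩
    rcases eq_or_ne j (i+1) with rfl | hij2
    · -- j = i + 1 : contradiction
      exfalso
      rw [heval, heval] at hdes
      rw [S'_apply_of_ne (by omega) (by omega), S'_apply_succ] at hdes
      have b1 : sg u i ≤ i := sg_avoid_le hne le_rfl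
      have b2 : i < sg u (i+1+1) := sg_avoid_gt hne (by omega)
      omega
    rcases eq_or_ne i (j+1) with rfl | hij3
    · -- i = j + 1 : contradiction
      exfalso
      rw [heval, heval] at hdes
      rw [S'_apply_self, S'_apply_of_ne (by omega) (by omega)] at hdes
      have hne' : ∀ a ∈ u, a ≠ j + 1 := hne
      have b1 : sg u j ≤ j + 1 := sg_avoid_le hne' (by omega)
      have b2 : j + 1 < sg u (j+1+1) := sg_avoid_gt hne' (by omega)
      omega
    -- |i - j| ≥ 2
    have e1 : sg (u ++ [i]) (j+1) = sg u (j+1) := by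
      rw [heval, S'_apply_of_ne (by omega) (by omega)]
    have e2 : sg (u ++ [i]) j = sg u j := by
      rw [heval, S'_apply_of_ne (by omega) (by omega)]
    rw [e1, e2] at hdes
    obtain ⟨v', h1, h2, h3, h4, h5⟩ :=
      ih u j hlu hu (fun a ha => hw a (List.mem_append_left _ ha)) hj hdes
    have hcomm : X j * X i = X i * X j := by
      rcases Nat.lt_or_ge i j with hlt | hge
      · exact (X_comm_s12 hi1 (by omega)).symm
      · exact X_comm_s12 hj (by omega)
    refine ⟨v' ++ [i], ?_, ?_, ?_, ?_, ?_⟩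
    · exact List.Nodup.append h1 (List.nodup_singleton i)
        (fun a ha hb => (hne a (h2 a ha)) (List.mem_singleton.mp hb))
    · intro a ha
      rcases List.mem_append.mp ha with ha | ha
      · exact List.mem_append_left _ (h2 a ha)
      · exact List.mem_append_right _ ha
    · intro hmem
      rcases List.mem_append.mp hmem with hmem | hmem
      · exact h3 hmem
      · exact absurd (List.mem_singleton.mp hmem) (by omega)
    · simp only [List.length_append, List.length_singleton] at *; omega
    · simp only [Pw_append, Pw_singleton]
      rw [h5, Pw_append, Pw_singleton, mul_assoc, hcomm, ← mul_assoc]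

/-- a nonempty nodup word has nontrivial permutation -/
lemma inj_nil_case (w' : List ℕ) (hnd' : w'.Nodup) (hsg : sg [] = sg w') :
    Pw ([] : List ℕ) = Pw w' := by
  rcases w'.eq_nil_or_concat with rfl | ⟨u, i, rfl⟩
  · rfl
  · exfalso
    rw [List.concat_eq_append] at *
    have hiu : i ∉ u := fun hmem =>
      (List.disjoint_of_nodup_append hnd') hmem (List.mem_singleton.mpr rfl)
    have hne : ∀ a ∈ u, a ≠ i := fun a ha h => hiu (by rwa [h] at ha)
    have h1 : sg (u ++ [i]) i = sg u (i + 1) := by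
      rw [sg_append, sg_singleton, Equiv.Perm.mul_apply, S'_apply_self]
    have hgt : i < sg u (i+1) := sg_avoid_gt hne (by omega)
    rw [← hsg] at h1
    simp only [sg_nil, Equiv.Perm.one_apply] at h1
    omega

lemma sg_injOn_aux : ∀ N (w w' : List ℕ), w.length ≤ N → w.Nodup → w'.Nodup →
    (∀ a ∈ w, 1 ≤ a) → (∀ a ∈ w', 1 ≤ a) → sg w = sg w' → Pw w = Pw w' := by
  intro N
  induction N with
  | zero =>
    intro w w' hlen hnd hnd' hw hw' hsg
    have hw0 : w = [] := List.length_eq_zero_iff.mp (Nat.le_zero.mp hlen)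
    subst hw0
    exact inj_nil_case w' hnd' hsg
  | succ N ih =>
    intro w w' hlen hnd hnd' hw hw' hsg
    rcases w.eq_nil_or_concat with rfl | ⟨u, j, rfl⟩
    · exact inj_nil_case w' hnd' hsg
    rw [List.concat_eq_append] at *
    have hu : u.Nodup := List.Nodup.of_append_left hnd
    have hju : j ∉ u := fun hmem =>
      (List.disjoint_of_nodup_append hnd) hmem (List.mem_singleton.mpr rfl)
    have hj1 : 1 ≤ j := hw j (List.mem_append_right u (List.mem_singleton.mpr rfl))
    have hne : ∀ a ∈ u, a ≠ j := fun a ha h => hju (by rwa [h] at ha)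
    have heval : ∀ x, sg (u ++ [j]) x = sg u (S' j x) := by
      intro x; rw [sg_append, sg_singleton, Equiv.Perm.mul_apply]
    have hdes : sg w' (j+1) < sg w' j := by
      rw [← hsg, heval, heval, S'_apply_succ, S'_apply_self]
      exact lt_of_le_of_lt (sg_avoid_le hne le_rfl) (sg_avoid_gt hne (by omega))
    obtain ⟨v, h1, h2, h3, h4, h5⟩ := exists_last_letter w'.length w' j le_rfl hnd' hw' hj1 hdes
    have hv1 : ∀ a ∈ v, 1 ≤ a := fun a ha => hw' a (h2 a ha)
    have hsgv : sg (v ++ [j]) = sg w' := by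
      have e1 : phi (Pw w') = sg w' := phi_Pw hw'
      have e2 : phi (Pw (v ++ [j])) = sg (v ++ [j]) := phi_Pw (by
        intro a ha
        rcases List.mem_append.mp ha with ha | ha
        · exact hv1 a ha
        · rw [List.mem_singleton.mp ha]; exact hj1)
      rw [← e1, ← e2, h5]
    have hcancel : sg u = sg v := by
      have h : sg u * S' j = sg v * S' j := by
        rw [← sg_singleton j, ← sg_append, ← sg_append, hsgv, hsg]
      exact mul_right_cancel h
    have hlu : u.length ≤ N := by
      simp only [List.length_append, List.length_singleton] at hlen; omega
    have hPu : Pw u = Pw v := ih u v hlu hu h1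
      (fun a ha => hw a (List.mem_append_left _ ha)) hv1 hcancel
    rw [Pw_append, hPu, ← Pw_append, h5]

/-! ### boolean permutations and their count -/

/-- permutations of square-free words over letters `1..k` -/
def AA (k : ℕ) : Set (Equiv.Perm ℕ) :=
  {π | ∃ w : List ℕ, w.Nodup ∧ (∀ a ∈ w, 1 ≤ a ∧ a ≤ k) ∧ π = sg w}

/-- those whose word contains the top letter `k` -/
def UU (k : ℕ) : Set (Equiv.Perm ℕ) := {π ∈ AA k | π (k+1) ≠ k+1}

lemma one_mem_AA (k : ℕ) : 1 ∈ AA k := ⟨[], List.nodup_nil, by simp, rfl⟩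

lemma AA_fix_high {k : ℕ} {π : Equiv.Perm ℕ} (h : π ∈ AA k) {x : ℕ} (hx : k + 2 ≤ x) :
    π x = x := by
  obtain ⟨w, _, hw, rfl⟩ := h
  exact sg_fix_high (fun a ha => (hw a ha).2) hx

lemma AA_le {k : ℕ} {π : Equiv.Perm ℕ} (h : π ∈ AA k) {x : ℕ} (hx : x ≤ k + 1) :
    π x ≤ k + 1 := by
  obtain ⟨w, _, hw, rfl⟩ := h
  exact sg_le_of_le (fun a ha => (hw a ha).2) hx

lemma AA_mono {k : ℕ} : AA k ⊆ AA (k+1) := by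
  rintro π ⟨w, h1, h2, rfl⟩
  exact ⟨w, h1, fun a ha => ⟨(h2 a ha).1, le_trans (h2 a ha).2 (Nat.le_succ k)⟩, rfl⟩

lemma AA_drop {k : ℕ} {π : Equiv.Perm ℕ} (h : π ∈ AA (k+1)) (hfix : π (k+2) = k+2) :
    π ∈ AA k := by
  obtain ⟨w, h1, h2, rfl⟩ := h
  by_cases hk : (k+1) ∈ w
  · exfalso
    have hcm := sg_contains_max (by omega) h1 hk (fun a ha => (h2 a ha).2)
    have e : k + 1 + 1 = k + 2 := by omega
    rw [e] at hcm
    omega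
  · refine ⟨w, h1, fun a ha => ⟨(h2 a ha).1, ?_⟩, rfl⟩
    have := (h2 a ha).2
    have : a ≠ k + 1 := fun h => hk (by rwa [h] at ha)
    omega

lemma AA_split (k : ℕ) : AA (k+1) = AA k ∪ UU (k+1) := by
  ext π
  constructor
  · intro h
    by_cases hfix : π (k+2) = k+2
    · exact Or.inl (AA_drop h hfix)
    · exact Or.inr ⟨h, hfix⟩
  · rintro (h | h)
    · exact AA_mono h
    · exact h.1

lemma AA_disj_UU (k : ℕ) : Disjoint (AA k) (UU (k+1)) := by
  rw [Set.disjoint_left]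
  rintro π h1 ⟨_, h3⟩
  exact h3 (AA_fix_high h1 (by omega))

lemma UU_zero : UU 0 = ∅ := by
  ext π
  simp only [UU, AA, Set.mem_setOf_eq, Set.mem_empty_iff_false, iff_false, not_and]
  rintro ⟨w, h1, h2, rfl⟩
  have hw0 : w = [] := by
    cases w with
    | nil => rfl
    | cons a t => exact absurd (h2 a (List.mem_cons_self)) (by omega)
  subst hw0
  simp

lemma UU_one : UU 1 = {S' 1} := by
  ext π
  constructor
  · rintro ⟨⟨w, h1, h2, rfl⟩, h3⟩
    have hw : w = [] ∨ w = [1] := by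
      cases w with
      | nil => exact Or.inl rfl
      | cons a t =>
        have ha : a = 1 := by have := h2 a (List.mem_cons_self); omega
        subst ha
        cases t with
        | nil => exact Or.inr rfl
        | cons b t' =>
          have hb : b = 1 := by
            have := h2 b (List.mem_cons_of_mem 1 (List.mem_cons_self)); omega
          exfalso
          rw [hb] at h1
          simp [List.nodup_cons] at h1
    rcases hw with rfl | rfl
    · simp at h3
    · simp
  · rintro rfl
    refine ⟨⟨[1], List.nodup_singleton 1, by simp, by simp⟩, ?_⟩
    rw [S'_apply_succ]
    omega

lemma append_top_mem_UU {k : ℕ} {δ : Equiv.Perm ℕ} (hδ : δ ∈ AA (k+1)) :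
    δ * S' (k+2) ∈ UU (k+2) := by
  obtain ⟨w, h1, h2, rfl⟩ := hδ
  constructor
  · refine ⟨w ++ [k+2], ?_, ?_, by rw [sg_append, sg_singleton]⟩
    · refine List.Nodup.append h1 (List.nodup_singleton _) ?_
      intro a ha hb
      rw [List.mem_singleton.mp hb] at ha
      have := (h2 _ ha).2
      omega
    · intro a ha
      rcases List.mem_append.mp ha with ha | ha
      · have := h2 a ha; omega
      · rw [List.mem_singleton.mp ha]; omega
  · rw [Equiv.Perm.mul_apply, S'_apply_succ]
    have : sg w (k+2) ≤ k + 2 := sg_le_of_le (fun a ha => (h2 a ha).2) (by omega)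
    omega

lemma top_cons_mem_UU {k : ℕ} {δ : Equiv.Perm ℕ} (hδ : δ ∈ AA (k+1)) :
    S' (k+2) * δ ∈ UU (k+2) := by
  obtain ⟨w, h1, h2, rfl⟩ := hδ
  constructor
  · refine ⟨(k+2) :: w, ?_, ?_, by rw [sg_cons]⟩
    · refine List.nodup_cons.mpr ⟨fun h => ?_, h1⟩
      have := (h2 _ h).2; omega
    · intro a ha
      rcases List.mem_cons.mp ha with rfl | ha
      · omega
      · have := h2 a ha; omega
  · rw [Equiv.Perm.mul_apply]
    have hfix : sg w (k+2+1) = k+2+1 := sg_fix_high (fun a ha => (h2 a ha).2) (by omega)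
    rw [hfix, S'_apply_succ]
    omega

lemma UU_rec (k : ℕ) : UU (k+2) =
    ((fun δ => δ * S' (k+2)) '' AA k) ∪ ((fun δ => δ * S' (k+2)) '' UU (k+1)) ∪
    ((fun δ => S' (k+2) * δ) '' UU (k+1)) := by
  ext π
  constructor
  · rintro ⟨⟨w, hnd, hw, rfl⟩, hmove⟩
    have hkw : (k+2) ∈ w := by
      by_contra hk
      apply hmove
      apply sg_fix_high (c := k+1) _ (by omega)
      intro a ha
      have h1 := (hw a ha).2
      have h2 : a ≠ k+2 := fun h => hk (by rwa [h] at ha)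
      omega
    obtain ⟨s, t, rfl⟩ := List.append_of_mem hkw
    have hnds : s.Nodup := List.Nodup.of_append_left hnd
    have hdisj := List.disjoint_of_nodup_append hnd
    have hndct : ((k+2) :: t).Nodup := List.Nodup.of_append_right hnd
    have hnt : (k+2) ∉ t := (List.nodup_cons.mp hndct).1
    have hndt : t.Nodup := (List.nodup_cons.mp hndct).2
    have hns : (k+2) ∉ s := fun h => hdisj h (List.mem_cons_self)
    have hndst : (s ++ t).Nodup := by
      refine List.Nodup.append hnds hndt ?_
      intro a has hat
      exact hdisj has (List.mem_cons_of_mem _ hat)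
    have hsplit : sg (s ++ (k+2) :: t) = sg s * (S' (k+2) * sg t) := by
      rw [sg_append, sg_cons]
    have hws : ∀ a ∈ s, 1 ≤ a ∧ a ≤ k+2 := fun a ha => hw a (List.mem_append_left _ ha)
    have hwt : ∀ a ∈ t, 1 ≤ a ∧ a ≤ k+2 :=
      fun a ha => hw a (List.mem_append_right _ (List.mem_cons_of_mem _ ha))
    have hsne : ∀ a ∈ s, a ≠ k+2 := fun a ha h => hns (by rwa [h] at ha)
    have htne : ∀ a ∈ t, a ≠ k+2 := fun a ha h => hnt (by rwa [h] at ha)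
    by_cases hk1 : (k+1) ∈ s
    · -- k+1 occurs before k+2
      have hts : ∀ a ∈ t, a + 2 ≤ k+2 := by
        intro a hat
        have h1 := (hwt a hat).2
        have h2 := htne a hat
        have h3 : a ≠ k+1 := fun h => hdisj hk1 (List.mem_cons_of_mem _ (by rwa [h] at hat))
        omega
      have hcomm : S' (k+2) * sg t = sg t * S' (k+2) := S'_comm_sg hts
      have hst : ∀ a ∈ s ++ t, 1 ≤ a ∧ a ≤ k + 1 := by
        intro a ha
        rcases List.mem_append.mp ha with ha | ha
        · have h1 := hws a ha; have h2 := hsne a ha; omega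
        · have h1 := hwt a ha; have h2 := htne a ha; have := hts a ha; omega
      refine Or.inl (Or.inr ⟨sg (s ++ t), ⟨⟨s ++ t, hndst, hst, rfl⟩, ?_⟩, ?_⟩)
      · have := sg_contains_max (c := k+1) (by omega) hndst
          (List.mem_append_left _ hk1) (fun a ha => (hst a ha).2)
        omega
      · show sg (s ++ t) * S' (k+2) = sg (s ++ (k+2) :: t)
        rw [hsplit, hcomm, sg_append, mul_assoc]
    · by_cases hk2 : (k+1) ∈ t
      · -- k+1 occurs after k+2
        have hss : ∀ a ∈ s, a + 2 ≤ k+2 := by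
          intro a has
          have h1 := (hws a has).2
          have h2 := hsne a has
          have h3 : a ≠ k+1 := fun h => hk1 (by rwa [h] at has)
          omega
        have hcomm : S' (k+2) * sg s = sg s * S' (k+2) := S'_comm_sg hss
        have hst : ∀ a ∈ s ++ t, 1 ≤ a ∧ a ≤ k + 1 := by
          intro a ha
          rcases List.mem_append.mp ha with ha | ha
          · have := hss a ha; have := (hws a ha).1; omega
          · have h1 := hwt a ha; have h2 := htne a ha; omega
        refine Or.inr ⟨sg (s ++ t), ⟨⟨s ++ t, hndst, hst, rfl⟩, ?_⟩, ?_⟩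
        · have := sg_contains_max (c := k+1) (by omega) hndst
            (List.mem_append_right _ hk2) (fun a ha => (hst a ha).2)
          omega
        · show S' (k+2) * sg (s ++ t) = sg (s ++ (k+2) :: t)
          rw [hsplit, sg_append, ← mul_assoc, hcomm, mul_assoc]
      · -- k+1 absent
        have hst : ∀ a ∈ s ++ t, 1 ≤ a ∧ a ≤ k := by
          intro a ha
          rcases List.mem_append.mp ha with ha | ha
          · have h1 := hws a ha; have h2 := hsne a ha
            have h3 : a ≠ k+1 := fun h => hk1 (by rwa [h] at ha); omega
          · have h1 := hwt a ha; have h2 := htne a ha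
            have h3 : a ≠ k+1 := fun h => hk2 (by rwa [h] at ha); omega
        have hts : ∀ a ∈ t, a + 2 ≤ k+2 := by
          intro a hat
          have := hst a (List.mem_append_right _ hat); omega
        have hcomm : S' (k+2) * sg t = sg t * S' (k+2) := S'_comm_sg hts
        refine Or.inl (Or.inl ⟨sg (s ++ t), ⟨s ++ t, hndst, hst, rfl⟩, ?_⟩)
        show sg (s ++ t) * S' (k+2) = sg (s ++ (k+2) :: t)
        rw [hsplit, hcomm, sg_append, mul_assoc]
  · rintro ((⟨δ, hδ, rfl⟩ | ⟨δ, hδ, rfl⟩) | ⟨δ, hδ, rfl⟩)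
    · exact append_top_mem_UU (AA_mono hδ)
    · exact append_top_mem_UU hδ.1
    · exact top_cons_mem_UU hδ.1

lemma AA_zero : AA 0 = {1} := by
  ext π
  constructor
  · rintro ⟨w, h1, h2, rfl⟩
    have hw0 : w = [] := by
      cases w with
      | nil => rfl
      | cons a t => exact absurd (h2 a (List.mem_cons_self)) (by omega)
    subst hw0
    rfl
  · rintro rfl
    exact one_mem_AA 0

lemma UU_mem_ne {k : ℕ} {ρ : Equiv.Perm ℕ} (h : ρ ∈ UU (k+1)) : ρ (k+2) ≤ k+1 := by
  have h1 : ρ (k+2) ≤ k + 2 := AA_le h.1 (by omega)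
  have h2 : ρ (k+1+1) ≠ k+1+1 := h.2
  have e : k+1+1 = k+2 := rfl
  rw [e] at h2
  omega

lemma UU_disj1 (k : ℕ) :
    Disjoint ((fun δ => δ * S' (k+2)) '' AA k) ((fun δ => δ * S' (k+2)) '' UU (k+1)) := by
  rw [Set.disjoint_left]
  rintro π ⟨δ, hδ, rfl⟩ ⟨ρ, hρ, heq⟩
  have hc : ρ = δ := mul_right_cancel heq
  subst hc
  have h1 : ρ (k+2) = k+2 := AA_fix_high hδ (by omega)
  have h2 := UU_mem_ne hρ
  omega

lemma UU_disj2 (k : ℕ) :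
    Disjoint ((fun δ => δ * S' (k+2)) '' AA k) ((fun δ => S' (k+2) * δ) '' UU (k+1)) := by
  rw [Set.disjoint_left]
  rintro π ⟨δ, hδ, rfl⟩ ⟨ρ, hρ, heq⟩
  have h1 : (δ * S' (k+2)) (k+2) = δ (k+2+1) := by
    rw [Equiv.Perm.mul_apply, S'_apply_self]
  have h2 : δ (k+2+1) = k+2+1 := AA_fix_high hδ (by omega)
  have h3 : (S' (k+2) * ρ) (k+2) = S' (k+2) (ρ (k+2)) := Equiv.Perm.mul_apply _ _ _
  have h4 := UU_mem_ne hρ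
  have h5 : S' (k+2) (ρ (k+2)) = ρ (k+2) := S'_apply_of_ne (by omega) (by omega)
  have heq' : S' (k+2) * ρ = δ * S' (k+2) := heq
  rw [heq'] at h3
  omega

lemma UU_disj3 (k : ℕ) :
    Disjoint ((fun δ => δ * S' (k+2)) '' UU (k+1)) ((fun δ => S' (k+2) * δ) '' UU (k+1)) := by
  rw [Set.disjoint_left]
  rintro π ⟨δ, hδ, rfl⟩ ⟨ρ, hρ, heq⟩
  have h1 : (δ * S' (k+2)) (k+2+1) = δ (k+2) := by
    rw [Equiv.Perm.mul_apply, S'_apply_succ]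
  have h2 := UU_mem_ne hδ
  have h3 : (S' (k+2) * ρ) (k+2+1) = S' (k+2) (ρ (k+2+1)) := Equiv.Perm.mul_apply _ _ _
  have h4 : ρ (k+2+1) = k+2+1 := AA_fix_high hρ.1 (by omega)
  have h5 : S' (k+2) (k+2+1) = k+2 := S'_apply_succ _
  have heq' : S' (k+2) * ρ = δ * S' (k+2) := heq
  rw [heq', h4, h5] at h3
  omega

lemma S'_one_ne_one : S' 1 ≠ 1 := by
  intro h
  have : S' 1 1 = 1 := by rw [h]; rfl
  rw [S'_apply_self] at this
  omega

lemma AAUU_card : ∀ k, (AA k).Finite ∧ (UU k).Finite ∧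
    (AA k).ncard = Nat.fib (2*k+1) ∧ (UU k).ncard = Nat.fib (2*k) := by
  intro k
  induction k using Nat.strong_induction_on with
  | _ k ih =>
    match k with
    | 0 =>
      rw [AA_zero, UU_zero]
      refine ⟨Set.finite_singleton 1, Set.finite_empty, by simp, by simp⟩
    | 1 =>
      have hsplit : AA 1 = {1} ∪ {S' 1} := by
        rw [AA_split 0, AA_zero, UU_one]
      have hU : (UU 1).Finite := by rw [UU_one]; exact Set.finite_singleton _
      have hA : (AA 1).Finite := by
        rw [hsplit]; exact (Set.finite_singleton _).union (Set.finite_singleton _)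
      refine ⟨hA, hU, ?_, ?_⟩
      · rw [hsplit, Set.singleton_union]
        rw [Set.ncard_pair (Ne.symm S'_one_ne_one)]
        rfl
      · rw [UU_one, Set.ncard_singleton]
        rfl
    | (k+2) =>
      obtain ⟨hA0, hU0, hcA0, hcU0⟩ := ih k (by omega)
      obtain ⟨hA1, hU1, hcA1, hcU1⟩ := ih (k+1) (by omega)
      have hrec := UU_rec k
      have hf1 : ((fun δ => δ * S' (k+2)) '' AA k).Finite := hA0.image _
      have hf2 : ((fun δ => δ * S' (k+2)) '' UU (k+1)).Finite := hU1.image _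
      have hf3 : ((fun δ => S' (k+2) * δ) '' UU (k+1)).Finite := hU1.image _
      have hUfin : (UU (k+2)).Finite := by
        rw [hrec]; exact (hf1.union hf2).union hf3
      have hAfin : (AA (k+2)).Finite := by
        rw [AA_split (k+1)]; exact hA1.union hUfin
      have hinj1 : Function.Injective (fun δ : Equiv.Perm ℕ => δ * S' (k+2)) :=
        fun a b h => mul_right_cancel h
      have hinj2 : Function.Injective (fun δ : Equiv.Perm ℕ => S' (k+2) * δ) :=
        fun a b h => mul_left_cancel h
      have hcU : (UU (k+2)).ncard = Nat.fib (2*(k+2)) := by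
        rw [hrec, Set.ncard_union_eq (Set.disjoint_union_left.mpr ⟨UU_disj2 k, UU_disj3 k⟩)
          (hf1.union hf2) hf3, Set.ncard_union_eq (UU_disj1 k) hf1 hf2,
          Set.ncard_image_of_injective _ hinj1, Set.ncard_image_of_injective _ hinj1,
          Set.ncard_image_of_injective _ hinj2, hcA0, hcU1]
        have g3 : Nat.fib (2*k+3) = Nat.fib (2*k+1) + Nat.fib (2*k+2) := by
          have h := Nat.fib_add_two (n := 2*k+1)
          rwa [show 2*k+1+2 = 2*k+3 from by omega, show 2*k+1+1 = 2*k+2 from by omega] at h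
        have g4 : Nat.fib (2*k+4) = Nat.fib (2*k+2) + Nat.fib (2*k+3) := by
          have h := Nat.fib_add_two (n := 2*k+2)
          rwa [show 2*k+2+2 = 2*k+4 from by omega, show 2*k+2+1 = 2*k+3 from by omega] at h
        rw [show 2*(k+1) = 2*k+2 from by ring, show 2*(k+2) = 2*k+4 from by ring, g4, g3]
        omega
      refine ⟨hAfin, hUfin, ?_, hcU⟩
      rw [AA_split (k+1), Set.ncard_union_eq (AA_disj_UU (k+1)) hA1 hUfin, hcA1, hcU]
      have g5 : Nat.fib (2*k+5) = Nat.fib (2*k+3) + Nat.fib (2*k+4) := by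
        have h := Nat.fib_add_two (n := 2*k+3)
        rwa [show 2*k+3+2 = 2*k+5 from by omega, show 2*k+3+1 = 2*k+4 from by omega] at h
      rw [show 2*(k+2)+1 = 2*k+5 from by ring, show 2*(k+1)+1 = 2*k+3 from by ring,
        show 2*(k+2) = 2*k+4 from by ring, g5]

/-! ### final assembly -/

lemma mem_C_iff {n : ℕ} {β γ : MB} :
    γ ∈ C n β ↔ (∃ w : List ℕ, w.Nodup ∧ (∀ i ∈ w, 1 ≤ i ∧ i < n) ∧ γ = Pw w) ∧
      β * γ = γ * β := Iff.rfl

lemma phi_injOn_C (r : ℕ) : Set.InjOn phi (C (r+3) (X (r+2))) := by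
  rintro γ hγ γ' hγ' heq
  obtain ⟨⟨w, h1, h2, rfl⟩, -⟩ := mem_C_iff.mp hγ
  obtain ⟨⟨w', h1', h2', rfl⟩, -⟩ := mem_C_iff.mp hγ'
  have e : sg w = sg w' := by
    rw [← phi_Pw (fun a ha => (h2 a ha).1), ← phi_Pw (fun a ha => (h2' a ha).1)]
    exact heq
  exact sg_injOn_aux w.length w w' le_rfl h1 h1' (fun a ha => (h2 a ha).1)
    (fun a ha => (h2' a ha).1) e

lemma phi_image_C (r : ℕ) : phi '' (C (r+3) (X (r+2))) =
    AA r ∪ ((fun δ => δ * S' (r+2)) '' AA r) := by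
  ext π
  constructor
  · rintro ⟨γ, hγ, rfl⟩
    obtain ⟨⟨w, hnd, hw, rfl⟩, hcomm⟩ := mem_C_iff.mp hγ
    have hw1 : ∀ a ∈ w, 1 ≤ a := fun a ha => (hw a ha).1
    have hw2 : ∀ a ∈ w, a ≤ r + 2 := fun a ha => by have := (hw a ha).2; omega
    have hphi : phi (Pw w) = sg w := phi_Pw hw1
    have hc : S' (r+2) * sg w = sg w * S' (r+2) := by
      have h := congrArg phi hcomm
      rw [map_mul, map_mul, hphi, phi_X (by omega)] at h
      exact h
    have hconj : Equiv.swap (sg w (r+2)) (sg w (r+2+1)) = Equiv.swap (r+2) (r+2+1) := by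
      have hc' : Equiv.swap (r+2) (r+2+1) * sg w = sg w * Equiv.swap (r+2) (r+2+1) := hc
      rw [Equiv.swap_apply_apply, ← hc']
      group
    have hcase : (sg w (r+2) = r+2 ∧ sg w (r+2+1) = r+2+1) ∨
        (sg w (r+2) = r+2+1 ∧ sg w (r+2+1) = r+2) := by
      have ev1 : Equiv.swap (sg w (r+2)) (sg w (r+2+1)) (r+2) = r+2+1 := by
        rw [hconj]; exact Equiv.swap_apply_left _ _
      have ev2 : Equiv.swap (sg w (r+2)) (sg w (r+2+1)) (r+2+1) = r+2 := by
        rw [hconj]; exact Equiv.swap_apply_right _ _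
      rw [Equiv.swap_apply_def] at ev1 ev2
      split_ifs at ev1 ev2 <;> omega
    -- the letter r+1 does not occur in w
    have hmid : (r+1) ∉ w := by
      intro hmid
      by_cases htop : (r+2) ∈ w
      · obtain ⟨s, t, rfl⟩ := List.append_of_mem htop
        have hnds : s.Nodup := List.Nodup.of_append_left hnd
        have hdisj := List.disjoint_of_nodup_append hnd
        have hndct : ((r+2) :: t).Nodup := List.Nodup.of_append_right hnd
        have hnt : (r+2) ∉ t := (List.nodup_cons.mp hndct).1
        have hndt : t.Nodup := (List.nodup_cons.mp hndct).2
        have hns : (r+2) ∉ s := fun h => hdisj h (List.mem_cons_self)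
        have hws : ∀ a ∈ s, a ≤ r + 2 := fun a ha => hw2 a (List.mem_append_left _ ha)
        have hwt : ∀ a ∈ t, a ≤ r + 2 :=
          fun a ha => hw2 a (List.mem_append_right _ (List.mem_cons_of_mem _ ha))
        have hts : ∀ a ∈ t, a ≤ r + 1 := by
          intro a ha
          have h1 := hwt a ha
          have h2 : a ≠ r+2 := fun h => hnt (by rwa [h] at ha)
          omega
        have heval : ∀ x, sg (s ++ (r+2) :: t) x = sg s (S' (r+2) (sg t x)) := by
          intro x
          rw [sg_append, sg_cons]
          simp [Equiv.Perm.mul_apply]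
        have htfix : sg t (r+2+1) = r+2+1 := sg_fix_high hts (by omega)
        have hval3 : sg (s ++ (r+2) :: t) (r+2+1) = sg s (r+2) := by
          rw [heval, htfix, S'_apply_succ]
        rcases List.mem_append.mp hmid with hmids | hmidt
        · -- r+1 before r+2
          have hss : ∀ a ∈ s, a ≤ r + 1 := by
            intro a ha
            have h1 := hws a ha
            have h2 : a ≠ r+2 := fun h => hns (by rwa [h] at ha)
            omega
          have hcm2 := sg_contains_max (c := r+1) (by omega) hnds hmids hss
          rw [show r+1+1 = r+2 from rfl] at hcm2
          rw [hval3] at hcase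
          omega
        · have hmidt' : (r+1) ∈ t := List.mem_of_ne_of_mem (by omega) hmidt
          have hss : ∀ a ∈ s, a ≤ r := by
            intro a ha
            have h1 := hws a ha
            have h2 : a ≠ r+2 := fun h => hns (by rwa [h] at ha)
            have h3 : a ≠ r+1 := fun h =>
              hdisj (by rwa [h] at ha) (List.mem_cons_of_mem _ hmidt')
            omega
          have hsfix : sg s (r+2) = r+2 := sg_fix_high hss (by omega)
          rw [hval3, hsfix] at hcase
          have htcm : sg t (r+1+1) ≤ r+1 := sg_contains_max (by omega) hndt hmidt' hts
          rw [show r+1+1 = r+2 from rfl] at htcm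
          have hval2 : sg (s ++ (r+2) :: t) (r+2) = sg s (sg t (r+2)) := by
            rw [heval, S'_apply_of_ne (by omega) (by omega)]
          have hsle : sg s (sg t (r+2)) ≤ r + 1 :=
            sg_le_of_le (c := r) hss (by omega)
          rw [hval2] at hcase
          omega
      · -- r+1 ∈ w , r+2 ∉ w
        have hle : ∀ a ∈ w, a ≤ r + 1 := by
          intro a ha
          have h1 := hw2 a ha
          have h2 : a ≠ r+2 := fun h => htop (by rwa [h] at ha)
          omega
        have h3 := sg_contains_max (by omega) hnd hmid hle
        rw [show r+1+1 = r+2 from rfl] at h3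
        omega
    -- now produce the membership
    by_cases htop : (r+2) ∈ w
    · obtain ⟨s, t, rfl⟩ := List.append_of_mem htop
      have hnds : s.Nodup := List.Nodup.of_append_left hnd
      have hdisj := List.disjoint_of_nodup_append hnd
      have hndct : ((r+2) :: t).Nodup := List.Nodup.of_append_right hnd
      have hnt : (r+2) ∉ t := (List.nodup_cons.mp hndct).1
      have hndt : t.Nodup := (List.nodup_cons.mp hndct).2
      have hns : (r+2) ∉ s := fun h => hdisj h (List.mem_cons_self)
      have hndst : (s ++ t).Nodup := by
        refine List.Nodup.append hnds hndt ?_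
        intro a has hat
        exact hdisj has (List.mem_cons_of_mem _ hat)
      have hst : ∀ a ∈ s ++ t, 1 ≤ a ∧ a ≤ r := by
        intro a ha
        have h1 : a ∈ s ++ (r+2) :: t := by
          rcases List.mem_append.mp ha with h | h
          · exact List.mem_append_left _ h
          · exact List.mem_append_right _ (List.mem_cons_of_mem _ h)
        have h2 := hw a h1
        have h3 : a ≠ r + 1 := fun h => hmid (by rwa [h] at h1)
        have h4 : a ≠ r + 2 := by
          rintro rfl
          rcases List.mem_append.mp ha with h | h
          · exact hns h
          · exact hnt h
        omega
      have hts : ∀ a ∈ t, a + 2 ≤ r+2 := by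
        intro a ha
        have := hst a (List.mem_append_right _ ha)
        omega
      have hcm : S' (r+2) * sg t = sg t * S' (r+2) := S'_comm_sg hts
      refine Or.inr ⟨sg (s ++ t), ⟨s ++ t, hndst, hst, rfl⟩, ?_⟩
      show sg (s ++ t) * S' (r+2) = phi (Pw (s ++ (r+2) :: t))
      rw [phi_Pw hw1, sg_append s ((r+2) :: t), sg_cons, hcm, sg_append, mul_assoc]
    · refine Or.inl ⟨w, hnd, ?_, phi_Pw hw1⟩
      intro a ha
      have h1 := hw a ha
      have h2 : a ≠ r + 1 := fun h => hmid (by rwa [h] at ha)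
      have h3 : a ≠ r + 2 := fun h => htop (by rwa [h] at ha)
      omega
  · rintro (⟨w, hnd, hw, rfl⟩ | ⟨δ, ⟨w, hnd, hw, rfl⟩, rfl⟩)
    · refine ⟨Pw w, mem_C_iff.mpr ⟨⟨w, hnd, fun a ha => ⟨(hw a ha).1, by
        have := (hw a ha).2; omega⟩, rfl⟩, ?_⟩, phi_Pw (fun a ha => (hw a ha).1)⟩
      exact (X_comm_Pw (by omega) (fun a ha => ⟨(hw a ha).1, Or.inl (by
        have := (hw a ha).2; omega)⟩))
    · refine ⟨Pw (w ++ [r+2]), mem_C_iff.mpr ⟨⟨w ++ [r+2], ?_, ?_, rfl⟩, ?_⟩, ?_⟩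
      · refine List.Nodup.append hnd (List.nodup_singleton _) ?_
        intro a ha hb
        rw [List.mem_singleton.mp hb] at ha
        have := (hw _ ha).2
        omega
      · intro a ha
        rcases List.mem_append.mp ha with ha | ha
        · have := hw a ha; omega
        · rw [List.mem_singleton.mp ha]; omega
      · refine X_comm_Pw (by omega) ?_
        intro a ha
        rcases List.mem_append.mp ha with ha | ha
        · have := hw a ha; exact ⟨this.1, Or.inl (by omega)⟩
        · rw [List.mem_singleton.mp ha]; exact ⟨by omega, Or.inr (Or.inr rfl)⟩
      · rw [phi_Pw (by
          intro a ha
          rcases List.mem_append.mp ha with ha | ha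
          · exact (hw a ha).1
          · rw [List.mem_singleton.mp ha]; omega), sg_append, sg_singleton]

lemma main_aux (r : ℕ) : (C (r+3) (X (r+2))).ncard = 2 * Nat.fib (2*r+1) := by
  obtain ⟨hAfin, -, hcA, -⟩ := AAUU_card r
  have hinj1 : Function.Injective (fun δ : Equiv.Perm ℕ => δ * S' (r+2)) :=
    fun a b h => mul_right_cancel h
  have hdisj : Disjoint (AA r) ((fun δ => δ * S' (r+2)) '' AA r) := by
    rw [Set.disjoint_left]
    rintro π h1 ⟨ρ, hρ, heq⟩
    have e1 : π (r+2+1) = r+2+1 := AA_fix_high h1 (by omega)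
    have e2 : (ρ * S' (r+2)) (r+2+1) = ρ (r+2) := by
      rw [Equiv.Perm.mul_apply, S'_apply_succ]
    have e3 : ρ (r+2) = r+2 := AA_fix_high hρ (by omega)
    have heq' : ρ * S' (r+2) = π := heq
    rw [heq', e1, e3] at e2
    omega
  rw [← Set.ncard_image_of_injOn (phi_injOn_C r), phi_image_C r,
    Set.ncard_union_eq hdisj hAfin (hAfin.image _),
    Set.ncard_image_of_injective _ hinj1, hcA]
  omega


/-- Lemma 2.7 b): `c_n(x_{n-1}) = 2 · F_{2n-5}` for all `n ≥ 3`. -/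
theorem card_centralizer_top_gen_in_SBn (n : ℕ) (hn : 3 ≤ n) :
    c n (X (n - 1)) = 2 * Nat.fib (2 * n - 5) := by
  obtain ⟨r, rfl⟩ : ∃ r, n = r + 3 := ⟨n - 3, by omega⟩
  have e1 : r + 3 - 1 = r + 2 := by omega
  have e2 : 2 * (r + 3) - 5 = 2 * r + 1 := by omega
  rw [e1, e2]
  exact main_aux r
end

section
/- Let n ≥ 2 and m ≥ 1, and define E_n = {α ∈ SB_{n+m} : x_j does not divide α for all j with 1 ≤ j ≤ n}. Then E_n is in bijection with SB_m; in particular, E_n has exactly F_{2m−1} elements. -/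
section Layer1
open FreeMonoid

/-- far-commutation relation -/
def CommRel : FreeMonoid ℕ+ → FreeMonoid ℕ+ → Prop := fun a b =>
  ∃ i j : ℕ+, ((i:ℕ) + 2 ≤ (j:ℕ) ∨ (j:ℕ) + 2 ≤ (i:ℕ)) ∧ a = of i * of j ∧ b = of j * of i

def commCon : Con (FreeMonoid ℕ+) := conGen CommRel

theorem commCon_le_braidCon {a b : FreeMonoid ℕ+} (h : commCon a b) : braidCon a b := by
  refine Con.conGen_le.mpr (fun x y hxy => ?_) h
  obtain ⟨i, j, hij | hij, hx, hy⟩ := hxy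
  · exact ConGen.Rel.of _ _ (Or.inr ⟨i, j, by
      rw [← PNat.coe_le_coe]; push_cast; omega, hx, hy⟩)
  · exact ConGen.Rel.symm (ConGen.Rel.of _ _ (Or.inr ⟨j, i, by
      rw [← PNat.coe_le_coe]; push_cast; omega, hy, hx⟩))

/-- the pair filter predicate -/
def pf (a b : ℕ+) : ℕ+ → Bool := fun c => decide (c = a ∨ c = b)

def near (a b : ℕ+) : Prop := a = b ∨ a + 1 = b ∨ b + 1 = a

theorem pf_true_iff {a b c : ℕ+} : pf a b c = true ↔ (c = a ∨ c = b) := by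
  simp [pf]

/-- invariance of near-pair filters under far commutation -/
theorem comm_filter_inv {u v : FreeMonoid ℕ+} (h : commCon u v) :
    ∀ a b : ℕ+, near a b →
      (toList u).filter (pf a b) = (toList v).filter (pf a b) := by
  induction h with
  | of x y hxy =>
    intro a b hab
    obtain ⟨i, j, hij, hx, hy⟩ := hxy
    subst hx; subst hy
    have hfar : ¬ (pf a b i = true ∧ pf a b j = true) := by
      rintro ⟨hi, hj⟩
      rw [pf_true_iff] at hi hj
      have h1 : (a:ℕ) = b ∨ (a:ℕ) + 1 = b ∨ (b:ℕ) + 1 = a := by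
        rcases hab with h | h | h
        · exact Or.inl (by rw [h])
        · exact Or.inr (Or.inl (by rw [← h]; push_cast; ring))
        · exact Or.inr (Or.inr (by rw [← h]; push_cast; ring))
      have hics : i = a ∨ i = b := hi
      have hjcs : j = a ∨ j = b := hj
      have : (i:ℕ) ≠ (j:ℕ) := by omega
      rcases hics with rfl | rfl <;> rcases hjcs with h2 | h2 <;>
        simp_all [← PNat.coe_inj] <;> omega
    show List.filter _ ([i] ++ [j]) = List.filter _ ([j] ++ [i])
    simp only [List.filter_append]
    by_cases hi : pf a b i = true <;> by_cases hj : pf a b j = true <;>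
      simp_all [List.filter]
  | refl x => intro a b _; rfl
  | symm _ ih => intro a b hab; exact (ih a b hab).symm
  | trans _ _ ih1 ih2 => intro a b hab; exact (ih1 a b hab).trans (ih2 a b hab)
  | mul _ _ ih1 ih2 =>
    intro a b hab
    show List.filter _ (toList _ ++ toList _) = List.filter _ (toList _ ++ toList _)
    simp only [List.filter_append, ih1 a b hab, ih2 a b hab]

/-- commCon preserves the multiset of letters -/
theorem comm_perm_inv {u v : FreeMonoid ℕ+} (h : commCon u v) :
    (toList u).Perm (toList v) := by
  induction h with
  | of x y hxy =>
    obtain ⟨i, j, _, hx, hy⟩ := hxy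
    subst hx; subst hy
    exact List.Perm.swap j i []
  | refl x => exact List.Perm.refl _
  | symm _ ih => exact ih.symm
  | trans _ _ ih1 ih2 => exact ih1.trans ih2
  | mul _ _ ih1 ih2 =>
    show (toList _ ++ toList _).Perm (toList _ ++ toList _)
    exact ih1.append ih2

/-- braidCon preserves the set of letters -/
theorem braid_mem_inv {u v : FreeMonoid ℕ+} (h : braidCon u v) :
    ∀ x : ℕ+, x ∈ toList u ↔ x ∈ toList v := by
  induction h with
  | of a b hab =>
    intro x
    rcases hab with ⟨i, ha, hb⟩ | ⟨i, j, _, ha, hb⟩ <;> subst ha <;> subst hb <;>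
    · show x ∈ _ ↔ x ∈ _
      simp only [toList_mul, toList_of, List.mem_append, List.mem_singleton]
      tauto
  | refl x => intro x; rfl
  | symm _ ih => intro x; exact (ih x).symm
  | trans _ _ ih1 ih2 => intro x; exact (ih1 x).trans (ih2 x)
  | mul _ _ ih1 ih2 =>
    intro x
    show x ∈ toList _ ++ toList _ ↔ x ∈ toList _ ++ toList _
    simp only [List.mem_append, ih1 x, ih2 x]

/-- braid congruence on nodup words implies far-commutation congruence -/
theorem braid_nodup_comm {u v : FreeMonoid ℕ+} (h : braidCon u v) :
    (toList u).Nodup ∨ (toList v).Nodup →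
      (toList u).Nodup ∧ (toList v).Nodup ∧ commCon u v := by
  induction h with
  | of a b hab =>
    rintro (hnd | hnd)
    all_goals rcases hab with ⟨i, ha, hb⟩ | ⟨i, j, hij, ha, hb⟩ <;> subst ha <;> subst hb
    · exfalso; revert hnd
      show ¬ ([i+1] ++ [i] ++ [i+1] : List ℕ+).Nodup
      simp
    · have hne : i ≠ j := by
        intro h; rw [← PNat.coe_inj] at h
        have := hij; rw [← PNat.coe_le_coe] at this; push_cast at this; omega
      refine ⟨?_, ?_, ConGen.Rel.of _ _ ⟨i, j, ?_, rfl, rfl⟩⟩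
      · show ([i] ++ [j] : List ℕ+).Nodup; simp [hne]
      · show ([j] ++ [i] : List ℕ+).Nodup; simp [Ne.symm hne]
      · left; rw [← PNat.coe_le_coe] at hij; push_cast at hij; omega
    · exfalso; revert hnd
      show ¬ ([i] ++ [i+1] ++ [i] : List ℕ+).Nodup
      simp
    · have hne : i ≠ j := by
        intro h; rw [← PNat.coe_inj] at h
        have := hij; rw [← PNat.coe_le_coe] at this; push_cast at this; omega
      refine ⟨?_, ?_, ConGen.Rel.of _ _ ⟨i, j, ?_, rfl, rfl⟩⟩
      · show ([i] ++ [j] : List ℕ+).Nodup; simp [hne]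
      · show ([j] ++ [i] : List ℕ+).Nodup; simp [Ne.symm hne]
      · left; rw [← PNat.coe_le_coe] at hij; push_cast at hij; omega
  | refl x =>
    rintro (h | h) <;> exact ⟨h, h, ConGen.Rel.refl x⟩
  | symm _ ih =>
    rintro (h | h)
    · obtain ⟨h1, h2, h3⟩ := ih (Or.inr h); exact ⟨h2, h1, ConGen.Rel.symm h3⟩
    · obtain ⟨h1, h2, h3⟩ := ih (Or.inl h); exact ⟨h2, h1, ConGen.Rel.symm h3⟩
  | trans _ _ ih1 ih2 =>
    rintro (h | h)
    · obtain ⟨h1, h2, h3⟩ := ih1 (Or.inl h)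
      obtain ⟨h4, h5, h6⟩ := ih2 (Or.inl h2)
      exact ⟨h1, h5, ConGen.Rel.trans h3 h6⟩
    · obtain ⟨h4, h5, h6⟩ := ih2 (Or.inr h)
      obtain ⟨h1, h2, h3⟩ := ih1 (Or.inr h4)
      exact ⟨h1, h5, ConGen.Rel.trans h3 h6⟩
  | @mul w x y z _ _ ih1 ih2 =>
    have key : ∀ {a b a' b' : FreeMonoid ℕ+},
        ((toList a).Nodup ∧ (toList b).Nodup ∧ commCon a b) →
        ((toList a').Nodup ∧ (toList b').Nodup ∧ commCon a' b') →
        (toList (a * a')).Nodup →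
        (toList (a * a')).Nodup ∧ (toList (b * b')).Nodup ∧ commCon (a * a') (b * b') := by
      rintro a b a' b' ⟨-, hb, hab⟩ ⟨-, hb', hab'⟩ hnd
      refine ⟨hnd, ?_, ConGen.Rel.mul hab hab'⟩
      have hnd' : (toList a ++ toList a').Nodup := hnd
      rw [List.nodup_append'] at hnd'
      show (toList b ++ toList b').Nodup
      rw [List.nodup_append']
      refine ⟨hb, hb', fun t ht ht' => ?_⟩
      exact hnd'.2.2 ((comm_perm_inv hab).mem_iff.mpr ht)
        ((comm_perm_inv hab').mem_iff.mpr ht')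
    rintro (hnd | hnd)
    · have h1 : (toList w).Nodup ∧ (toList x).Nodup ∧ commCon w x := by
        have : (toList w ++ toList y).Nodup := hnd
        rw [List.nodup_append] at this
        exact ih1 (Or.inl this.1)
      have h2 : (toList y).Nodup ∧ (toList z).Nodup ∧ commCon y z := by
        have : (toList w ++ toList y).Nodup := hnd
        rw [List.nodup_append] at this
        exact ih2 (Or.inl this.2.1)
      exact key h1 h2 hnd
    · have hnd2 : (toList x ++ toList z).Nodup := hnd
      rw [List.nodup_append] at hnd2
      have h1 : (toList x).Nodup ∧ (toList w).Nodup ∧ commCon x w := by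
        obtain ⟨p, q, r⟩ := ih1 (Or.inr hnd2.1)
        exact ⟨q, p, ConGen.Rel.symm r⟩
      have h2 : (toList z).Nodup ∧ (toList y).Nodup ∧ commCon z y := by
        obtain ⟨p, q, r⟩ := ih2 (Or.inr hnd2.2.1)
        exact ⟨q, p, ConGen.Rel.symm r⟩
      obtain ⟨p, q, r⟩ := key h1 h2 hnd
      exact ⟨q, p, ConGen.Rel.symm r⟩
end Layer1
section Layer2
open FreeMonoid

def far (a x : ℕ+) : Prop := (a:ℕ) + 2 ≤ (x:ℕ) ∨ (x:ℕ) + 2 ≤ (a:ℕ)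

theorem comm_swap {a x : ℕ+} (h : far a x) : commCon (of a * of x) (of x * of a) :=
  ConGen.Rel.of _ _ ⟨a, x, h, rfl, rfl⟩

theorem swap_front : ∀ (u : List ℕ+) (x : ℕ+) (r : List ℕ+), (∀ a ∈ u, far a x) →
    commCon (ofList (u ++ x :: r)) (ofList (x :: (u ++ r)))
  | [], x, r, _ => ConGen.Rel.refl _
  | a :: u, x, r, h => by
    have ih := swap_front u x r (fun b hb => h b (List.mem_cons_of_mem _ hb))
    simp only [List.cons_append, ofList_cons] at ih ⊢
    have t1 : commCon (of a * ofList (u ++ x :: r)) (of a * (of x * ofList (u ++ r))) :=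
      ConGen.Rel.mul (ConGen.Rel.refl _) ih
    have t2 : commCon (of a * (of x * ofList (u ++ r))) (of x * (of a * ofList (u ++ r))) := by
      rw [← mul_assoc, ← mul_assoc]
      exact ConGen.Rel.mul (comm_swap (h a (List.mem_cons_self))) (ConGen.Rel.refl _)
    exact ConGen.Rel.trans t1 t2

theorem swap_back : ∀ (v : List ℕ+) (x : ℕ+), (∀ a ∈ v, far a x) →
    commCon (ofList (x :: v)) (ofList (v ++ [x]))
  | [], x, _ => ConGen.Rel.refl _
  | a :: v, x, h => by
    have ih := swap_back v x (fun b hb => h b (List.mem_cons_of_mem _ hb))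
    simp only [List.cons_append, ofList_cons] at ih ⊢
    have hfar : far x a := by
      rcases h a (List.mem_cons_self) with h' | h'
      · exact Or.inr h'
      · exact Or.inl h'
    have t1 : commCon (of x * (of a * ofList v)) (of a * (of x * ofList v)) := by
      rw [← mul_assoc, ← mul_assoc]
      exact ConGen.Rel.mul (comm_swap hfar) (ConGen.Rel.refl _)
    have t2 : commCon (of a * (of x * ofList v)) (of a * ofList (v ++ [x])) :=
      ConGen.Rel.mul (ConGen.Rel.refl _) ih
    exact ConGen.Rel.trans t1 t2

def padd (s : ℕ+) (t : ℕ) : ℕ+ := ⟨(s:ℕ) + t, Nat.add_pos_left s.pos t⟩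

@[simp] theorem padd_coe (s : ℕ+) (t : ℕ) : ((padd s t : ℕ+) : ℕ) = (s:ℕ) + t := rfl

theorem padd_zero (s : ℕ+) : padd s 0 = s := PNat.coe_injective rfl

theorem padd_succ (s : ℕ+) (t : ℕ) : padd s (t + 1) = padd (s + 1) t :=
  PNat.coe_injective (by simp only [padd_coe]; push_cast; omega)

def decodeAux : ℕ+ → List ℕ+ → List (Option Bool) → List ℕ+
  | _, acc, [] => acc
  | s, acc, none :: c => decodeAux (s + 1) acc c
  | s, acc, some false :: c => decodeAux (s + 1) (acc ++ [s]) c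
  | s, acc, some true :: c => decodeAux (s + 1) (s :: acc) c

def ent (q p : ℕ+) (w : List ℕ+) : Option Bool :=
  if p ∈ w then some (decide (w.filter (pf q p) = [p, q])) else none

def codeAux : ℕ+ → ℕ+ → ℕ → List ℕ+ → List (Option Bool)
  | _, _, 0, _ => []
  | q, s, k + 1, w => ent q s w :: codeAux s (s + 1) k w

theorem dmem : ∀ (c : List (Option Bool)) (s : ℕ+) (acc : List ℕ+) (x : ℕ+),
    x ∈ decodeAux s acc c → x ∈ acc ∨ ((s:ℕ) ≤ (x:ℕ) ∧ (x:ℕ) < (s:ℕ) + c.length)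
  | [], s, acc, x, h => Or.inl h
  | none :: c, s, acc, x, h => by
    rcases dmem c (s + 1) acc x h with h' | h'
    · exact Or.inl h'
    · right
      simp only [List.length_cons]
      push_cast at h' ⊢
      omega
  | some false :: c, s, acc, x, h => by
    rcases dmem c (s + 1) (acc ++ [s]) x h with h' | h'
    · rcases List.mem_append.mp h' with h'' | h''
      · exact Or.inl h''
      · right; simp at h''; subst h''; simp
    · right
      simp only [List.length_cons]
      push_cast at h' ⊢
      omega
  | some true :: c, s, acc, x, h => by
    rcases dmem c (s + 1) (s :: acc) x h with h' | h'
    · rcases List.mem_cons.mp h' with h'' | h''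
      · subst h''; right; simp
      · exact Or.inl h''
    · right
      simp only [List.length_cons]
      push_cast at h' ⊢
      omega

theorem dsub : ∀ (c : List (Option Bool)) (s : ℕ+) (acc : List ℕ+) (x : ℕ+),
    x ∈ acc → x ∈ decodeAux s acc c
  | [], _, _, _, h => h
  | none :: c, s, acc, x, h => dsub c (s + 1) acc x h
  | some false :: c, s, acc, x, h =>
    dsub c (s + 1) (acc ++ [s]) x (List.mem_append.mpr (Or.inl h))
  | some true :: c, s, acc, x, h =>
    dsub c (s + 1) (s :: acc) x (List.mem_cons_of_mem _ h)

theorem dfil : ∀ (c : List (Option Bool)) (s : ℕ+) (acc : List ℕ+) (P : ℕ+ → Bool),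
    (∀ u : ℕ+, (s:ℕ) ≤ (u:ℕ) → (u:ℕ) < (s:ℕ) + c.length → P u = false) →
    (decodeAux s acc c).filter P = acc.filter P
  | [], _, _, _, _ => rfl
  | none :: c, s, acc, P, h => by
    refine dfil c (s + 1) acc P (fun u h1 h2 => h u ?_ ?_)
    · push_cast at h1 ⊢; omega
    · simp only [List.length_cons]; push_cast at h2 ⊢; omega
  | some false :: c, s, acc, P, h => by
    have step : (decodeAux (s+1) (acc ++ [s]) c).filter P = (acc ++ [s]).filter P := by
      refine dfil c (s + 1) (acc ++ [s]) P (fun u h1 h2 => h u ?_ ?_)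
      · push_cast at h1 ⊢; omega
      · simp only [List.length_cons]; push_cast at h2 ⊢; omega
    have hs : P s = false := h s (le_refl _) (by simp only [List.length_cons]; omega)
    show (decodeAux (s+1) (acc ++ [s]) c).filter P = acc.filter P
    rw [step, List.filter_append]
    simp [hs]
  | some true :: c, s, acc, P, h => by
    have step : (decodeAux (s+1) (s :: acc) c).filter P = (s :: acc).filter P := by
      refine dfil c (s + 1) (s :: acc) P (fun u h1 h2 => h u ?_ ?_)
      · push_cast at h1 ⊢; omega
      · simp only [List.length_cons]; push_cast at h2 ⊢; omega
    have hs : P s = false := h s (le_refl _) (by simp only [List.length_cons]; omega)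
    show (decodeAux (s+1) (s :: acc) c).filter P = acc.filter P
    rw [step, List.filter_cons]
    simp [hs]

theorem dnodup : ∀ (c : List (Option Bool)) (s : ℕ+) (acc : List ℕ+),
    acc.Nodup → (∀ x ∈ acc, (x:ℕ) < (s:ℕ)) → (decodeAux s acc c).Nodup
  | [], _, _, h, _ => h
  | none :: c, s, acc, h, hb => by
    refine dnodup c (s + 1) acc h (fun x hx => ?_)
    have := hb x hx; push_cast; omega
  | some false :: c, s, acc, h, hb => by
    refine dnodup c (s + 1) (acc ++ [s]) ?_ (fun x hx => ?_)
    · simp only [List.nodup_append', List.nodup_singleton]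
      refine ⟨h, trivial, fun t ht hts => ?_⟩
      simp only [List.mem_singleton] at hts
      subst hts
      exact absurd (hb t ht) (by omega)
    · rcases List.mem_append.mp hx with h' | h'
      · have := hb x h'; push_cast; omega
      · simp at h'; subst h'; push_cast; omega
  | some true :: c, s, acc, h, hb => by
    refine dnodup c (s + 1) (s :: acc) ?_ (fun x hx => ?_)
    · refine List.nodup_cons.mpr ⟨fun hs => ?_, h⟩
      exact absurd (hb s hs) (by omega)
    · rcases List.mem_cons.mp hx with h' | h'
      · subst h'; push_cast; omega
      · have := hb x h'; push_cast; omega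

theorem dsnoc : ∀ (c : List (Option Bool)) (s : ℕ+) (acc : List ℕ+) (o : Option Bool),
    decodeAux s acc (c ++ [o]) =
      match o with
      | none => decodeAux s acc c
      | some false => decodeAux s acc c ++ [padd s c.length]
      | some true => padd s c.length :: decodeAux s acc c
  | [], s, acc, o => by
    cases o with
    | none => rfl
    | some b => cases b <;> simp [decodeAux, padd_zero]
  | none :: c, s, acc, o => by
    have := dsnoc c (s + 1) acc o
    show decodeAux (s+1) acc (c ++ [o]) = _
    rw [this]
    cases o with
    | none => rfl
    | some b => cases b <;> simp [List.length_cons, padd_succ] <;> rfl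
  | some false :: c, s, acc, o => by
    have := dsnoc c (s + 1) (acc ++ [s]) o
    show decodeAux (s+1) (acc ++ [s]) (c ++ [o]) = _
    rw [this]
    cases o with
    | none => rfl
    | some b => cases b <;> simp [List.length_cons, padd_succ] <;> rfl
  | some true :: c, s, acc, o => by
    have := dsnoc c (s + 1) (s :: acc) o
    show decodeAux (s+1) (s :: acc) (c ++ [o]) = _
    rw [this]
    cases o with
    | none => rfl
    | some b => cases b <;> simp [List.length_cons, padd_succ] <;> rfl

end Layer2
section Layer2B
open FreeMonoid

theorem list_eq_singleton {l : List ℕ+} (hl : l.Nodup) {a : ℕ+}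
    (h : ∀ x, x ∈ l ↔ x = a) : l = [a] := by
  cases l with
  | nil => exact absurd ((h a).mpr rfl) List.not_mem_nil
  | cons b t =>
    have hb : b = a := (h b).mp (List.mem_cons_self)
    subst hb
    have ht : t = [] := by
      rw [List.eq_nil_iff_forall_not_mem]
      intro x hx
      have := (h x).mp (List.mem_cons_of_mem _ hx)
      subst this
      exact (List.nodup_cons.mp hl).1 hx
    rw [ht]

theorem afil {acc : List ℕ+} (hnd : acc.Nodup) {q s : ℕ+} (hs : s ∉ acc) :
    acc.filter (pf q s) = if q ∈ acc then [q] else [] := by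
  split_ifs with hq
  · refine list_eq_singleton (hnd.filter _) (fun x => ?_)
    simp only [List.mem_filter, pf_true_iff]
    constructor
    · rintro ⟨hx, rfl | rfl⟩
      · rfl
      · exact absurd hx hs
    · rintro rfl; exact ⟨hq, Or.inl rfl⟩
  · rw [List.eq_nil_iff_forall_not_mem]
    intro x hx
    simp only [List.mem_filter, pf_true_iff] at hx
    rcases hx with ⟨hx, rfl | rfl⟩
    · exact hq hx
    · exact hs hx

def ValidL : Bool → List (Option Bool) → Prop
  | _, [] => True
  | p, o :: c => (o = some true → p = true) ∧ ValidL o.isSome c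

def lastState (p : Bool) (c : List (Option Bool)) : Bool :=
  c.foldl (fun _ o => o.isSome) p

@[simp] theorem lastState_nil (p : Bool) : lastState p [] = p := rfl

theorem lastState_cons (p : Bool) (o : Option Bool) (c : List (Option Bool)) :
    lastState p (o :: c) = lastState o.isSome c := rfl

theorem lastState_snoc (p : Bool) (c : List (Option Bool)) (o : Option Bool) :
    lastState p (c ++ [o]) = o.isSome := by
  simp [lastState, List.foldl_append]

theorem validL_snoc {p : Bool} {c : List (Option Bool)} {o : Option Bool} :
    ValidL p (c ++ [o]) ↔ ValidL p c ∧ (o = some true → lastState p c = true) := by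
  induction c generalizing p with
  | nil => simp [ValidL]
  | cons o' c ih =>
    show (_ ∧ ValidL o'.isSome (c ++ [o])) ↔ _
    rw [ih, lastState_cons]
    show _ ↔ ((_ ∧ ValidL o'.isSome c) ∧ _)
    tauto

/-- roundtrip: the code of a decoded valid word is the original code -/
theorem roundtrip : ∀ (c : List (Option Bool)) (p : Bool), ValidL p c →
    ∀ (s : ℕ+) (acc : List ℕ+) (q : ℕ+), acc.Nodup → (∀ x ∈ acc, (x:ℕ) < (s:ℕ)) →
    ¬ ((s:ℕ) ≤ (q:ℕ) ∧ (q:ℕ) < (s:ℕ) + c.length) → ((q ∈ acc) ↔ p = true) →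
    codeAux q s c.length (decodeAux s acc c) = c
  | [], _, _, _, _, _, _, _, _, _ => rfl
  | o :: c, p, hv, s, acc, q, hnd, hb, hq, hqa => by
    have hs_acc : s ∉ acc := fun h => absurd (hb s h) (by omega)
    have hq_ne_s : q ≠ s := by
      rintro rfl
      simp only [List.length_cons] at hq
      exact hq ⟨le_refl _, by omega⟩
    -- the decoded word
    have key_fil : ∀ acc' : List ℕ+, (decodeAux (s+1) acc' c).filter (pf q s)
        = acc'.filter (pf q s) := by
      intro acc'
      refine dfil c (s+1) acc' (pf q s) (fun u h1 h2 => ?_)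
      have hus : u ≠ s := by
        intro h; subst h; push_cast at h1; omega
      have huq : u ≠ q := by
        intro h; subst h
        push_cast at h1 h2
        simp only [List.length_cons] at hq
        exact hq ⟨by omega, by omega⟩
      simp [pf, hus, huq]
    have tail : ∀ (acc' : List ℕ+), acc'.Nodup → (∀ x ∈ acc', (x:ℕ) < (s:ℕ)+1) →
        ((s ∈ acc') ↔ o.isSome = true) →
        codeAux s (s+1) c.length (decodeAux (s+1) acc' c) = c := by
      intro acc' h1 h2 h3
      refine roundtrip c o.isSome hv.2 (s+1) acc' s h1 (fun x hx => by
        have := h2 x hx; push_cast; omega) ?_ h3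
      push_cast
      omega
    cases o with
    | none =>
      show ent q s (decodeAux (s+1) acc c) :: _ = _
      have hsmem : s ∉ decodeAux (s+1) acc c := by
        intro hmem
        rcases dmem c (s+1) acc s hmem with h' | h'
        · exact hs_acc h'
        · push_cast at h'; omega
      rw [show ent q s (decodeAux (s+1) acc c) = none from if_neg hsmem]
      exact congrArg (none :: ·) (tail acc hnd
        (fun x hx => by have := hb x hx; push_cast; omega)
        (by simp only [Option.isSome_none, Bool.false_eq_true, iff_false]; exact hs_acc))
    | some b =>
      have hsnotin : ∀ acc' : List ℕ+, s ∈ acc' → s ∈ decodeAux (s+1) acc' c :=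
        fun acc' h => dsub c (s+1) acc' s h
      cases b with
      | false =>
        show ent q s (decodeAux (s+1) (acc ++ [s]) c) :: _ = _
        have hsmem : s ∈ decodeAux (s+1) (acc ++ [s]) c :=
          hsnotin _ (List.mem_append.mpr (Or.inr (List.mem_singleton_self s)))
        have hfil : (decodeAux (s+1) (acc ++ [s]) c).filter (pf q s)
            = (acc.filter (pf q s)) ++ [s] := by
          rw [key_fil, List.filter_append]
          simp [pf]
        have hbool : ¬ ((decodeAux (s+1) (acc ++ [s]) c).filter (pf q s) = [s, q]) := by
          rw [hfil, afil hnd hs_acc]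
          split_ifs with hqacc <;> simp [hq_ne_s]
        rw [show ent q s (decodeAux (s+1) (acc ++ [s]) c) = some false from by
          rw [ent, if_pos hsmem, decide_eq_false hbool]]
        refine congrArg (some false :: ·) (tail (acc ++ [s]) (by
            simp only [List.nodup_append', List.nodup_singleton]
            refine ⟨hnd, trivial, fun t ht hts => ?_⟩
            simp only [List.mem_singleton] at hts
            subst hts
            exact hs_acc ht)
          (fun x hx => by
            rcases List.mem_append.mp hx with h' | h'
            · have := hb x h'; push_cast; omega
            · simp at h'; subst h'; push_cast; omega)
          (by simp))
      | true =>
        have hqacc : q ∈ acc := hqa.mpr (hv.1 rfl)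
        show ent q s (decodeAux (s+1) (s :: acc) c) :: _ = _
        have hsmem : s ∈ decodeAux (s+1) (s :: acc) c :=
          hsnotin _ (List.mem_cons_self)
        have hfil : (decodeAux (s+1) (s :: acc) c).filter (pf q s) = [s, q] := by
          rw [key_fil, List.filter_cons]
          have : pf q s s = true := by simp [pf]
          rw [afil hnd hs_acc, if_pos hqacc]
          simp [this]
        rw [show ent q s (decodeAux (s+1) (s :: acc) c) = some true from by
          rw [ent, if_pos hsmem, decide_eq_true hfil]]
        refine congrArg (some true :: ·) (tail (s :: acc) (List.nodup_cons.mpr ⟨hs_acc, hnd⟩)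
          (fun x hx => by
            rcases List.mem_cons.mp hx with h' | h'
            · subst h'; push_cast; omega
            · have := hb x h'; push_cast; omega)
          (by simp))

/-- codes agree when near-pair filters agree -/
theorem code_eq : ∀ (k : ℕ) (q s : ℕ+) (w v : List ℕ+),
    (∀ a b : ℕ+, near a b → w.filter (pf a b) = v.filter (pf a b)) →
    (near q s ∨ (q ∉ w ∧ q ∉ v)) → codeAux q s k w = codeAux q s k v
  | 0, _, _, _, _, _, _ => rfl
  | k + 1, q, s, w, v, hfil, hq => by
    have hmem : ∀ x : ℕ+, x ∈ w ↔ x ∈ v := by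
      intro x
      have := hfil x x (Or.inl rfl)
      constructor
      · intro h
        have : x ∈ v.filter (pf x x) := by
          rw [← this]; exact List.mem_filter.mpr ⟨h, by simp [pf]⟩
        exact (List.mem_filter.mp this).1
      · intro h
        have : x ∈ w.filter (pf x x) := by
          rw [this]; exact List.mem_filter.mpr ⟨h, by simp [pf]⟩
        exact (List.mem_filter.mp this).1
    have hpair : w.filter (pf q s) = v.filter (pf q s) := by
      rcases hq with hq | ⟨hqw, hqv⟩
      · exact hfil q s hq
      · have e1 : w.filter (pf q s) = w.filter (pf s s) :=
          List.filter_congr (fun x hx => by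
            have : x ≠ q := fun h => hqw (h ▸ hx)
            simp [pf, this])
        have e2 : v.filter (pf q s) = v.filter (pf s s) :=
          List.filter_congr (fun x hx => by
            have : x ≠ q := fun h => hqv (h ▸ hx)
            simp [pf, this])
        rw [e1, e2, hfil s s (Or.inl rfl)]
    show ent q s w :: _ = ent q s v :: _
    rw [show ent q s w = ent q s v from by
      rw [ent, ent, hpair]
      by_cases h : s ∈ w
      · rw [if_pos h, if_pos ((hmem s).mp h)]
      · rw [if_neg h, if_neg (fun h' => h ((hmem s).mpr h'))]]
    rw [code_eq k s (s+1) w v hfil (Or.inl (Or.inr (Or.inl rfl)))]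

end Layer2B
section Layer2C
open FreeMonoid

theorem sur : ∀ (k : ℕ) (s : ℕ+) (l : List ℕ+), l.Nodup →
    (∀ x ∈ l, (s:ℕ) ≤ (x:ℕ) ∧ (x:ℕ) < (s:ℕ) + k) →
    ∃ c : List (Option Bool), c.length = k ∧ ValidL false c ∧
      (lastState false c = true ↔ ∃ x ∈ l, (x:ℕ) + 1 = (s:ℕ) + k) ∧
      commCon (ofList (decodeAux s [] c)) (ofList l)
  | 0, s, l, _, hb => by
    have hl : l = [] := by
      rw [List.eq_nil_iff_forall_not_mem]
      intro x hx
      have := hb x hx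
      omega
    subst hl
    exact ⟨[], rfl, trivial, by simp, ConGen.Rel.refl _⟩
  | k + 1, s, l, hnd, hb => by
    set m : ℕ+ := padd s k with hm
    by_cases hmem : m ∈ l
    · obtain ⟨u, v, rfl⟩ := List.append_of_mem hmem
      have hnd' : (u ++ v).Nodup ∧ m ∉ u ∧ m ∉ v := by
        have h1 := hnd
        rw [List.nodup_append'] at h1
        obtain ⟨hu, hm', hdisj⟩ := h1
        rw [List.nodup_cons] at hm'
        refine ⟨List.nodup_append'.mpr ⟨hu, hm'.2, fun t ht htv =>
          hdisj ht (List.mem_cons_of_mem _ htv)⟩,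
          fun h => hdisj h List.mem_cons_self, hm'.1⟩
      obtain ⟨huv, hmu, hmv⟩ := hnd'
      have hbuv : ∀ x ∈ u ++ v, (s:ℕ) ≤ (x:ℕ) ∧ (x:ℕ) < (s:ℕ) + k := by
        intro x hx
        have hx' : x ∈ u ++ m :: v := by
          rcases List.mem_append.mp hx with h | h
          · exact List.mem_append.mpr (Or.inl h)
          · exact List.mem_append.mpr (Or.inr (List.mem_cons_of_mem _ h))
        have hxm : x ≠ m := by
          rintro rfl
          rcases List.mem_append.mp hx with h | h
          · exact hmu h
          · exact hmv h
        have := hb x hx'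
        have hxm' : (x:ℕ) ≠ (m:ℕ) := fun h => hxm (PNat.coe_injective h)
        simp only [hm, padd_coe] at hxm'
        omega
      obtain ⟨c, hlen, hval, hlast, hcomm⟩ := sur k s (u ++ v) huv hbuv
      by_cases hv : ∃ x ∈ v, (x:ℕ) + 1 = (s:ℕ) + k
      · -- previous letter appears after m: m moves to the front
        refine ⟨c ++ [some true], by simp [hlen], ?_, ?_, ?_⟩
        · rw [validL_snoc]
          exact ⟨hval, fun _ => hlast.mpr (by
            obtain ⟨x, hx, hx'⟩ := hv
            exact ⟨x, List.mem_append.mpr (Or.inr hx), hx'⟩)⟩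
        · rw [lastState_snoc]
          simp only [Option.isSome_some, true_iff]
          exact ⟨m, hmem, by simp only [hm, padd_coe]; omega⟩
        · have hfar : ∀ a ∈ u, far a m := by
            intro a ha
            have hb' := hb a (List.mem_append.mpr (Or.inl ha))
            have h1 : a ≠ m := fun h => hmu (h ▸ ha)
            have h2 : (a:ℕ) + 1 ≠ (m:ℕ) := by
              intro h
              obtain ⟨x, hx, hx'⟩ := hv
              have : (a:ℕ) = (x:ℕ) := by simp only [hm, padd_coe] at h; omega
              have : a = x := PNat.coe_injective this
              subst this
              have h1' := hnd
              rw [List.nodup_append'] at h1'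
              exact h1'.2.2 ha (List.mem_cons_of_mem _ hx)
            have h3 : (a:ℕ) ≠ (m:ℕ) := fun h => h1 (PNat.coe_injective h)
            left
            simp only [hm, padd_coe] at h2 h3 ⊢
            omega
          have step1 : commCon (ofList (u ++ m :: v)) (ofList (m :: (u ++ v))) :=
            swap_front u m v hfar
          have hdec : decodeAux s [] (c ++ [some true]) = m :: decodeAux s [] c := by
            rw [dsnoc, hlen]
          rw [hdec, ofList_cons]
          have step2 : commCon (of m * ofList (decodeAux s [] c)) (of m * ofList (u ++ v)) :=
            ConGen.Rel.mul (ConGen.Rel.refl _) hcomm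
          rw [show of m * ofList (u ++ v) = ofList (m :: (u ++ v)) from rfl] at step2
          exact ConGen.Rel.trans step2 (ConGen.Rel.symm step1)
      · -- m moves to the back
        refine ⟨c ++ [some false], by simp [hlen], ?_, ?_, ?_⟩
        · rw [validL_snoc]
          exact ⟨hval, by simp⟩
        · rw [lastState_snoc]
          simp only [Option.isSome_some, true_iff]
          exact ⟨m, hmem, by simp only [hm, padd_coe]; omega⟩
        · have hfar : ∀ a ∈ v, far a m := by
            intro a ha
            have hb' := hb a (List.mem_append.mpr (Or.inr (List.mem_cons_of_mem _ ha)))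
            have h1 : a ≠ m := fun h => hmv (h ▸ ha)
            have h2 : (a:ℕ) + 1 ≠ (s:ℕ) + k := fun h => hv ⟨a, ha, h⟩
            have h3 : (a:ℕ) ≠ (m:ℕ) := fun h => h1 (PNat.coe_injective h)
            left
            simp only [hm, padd_coe] at h3 ⊢
            omega
          have step1 : commCon (ofList (m :: v)) (ofList (v ++ [m])) := swap_back v m hfar
          have step1' : commCon (ofList (u ++ m :: v)) (ofList (u ++ (v ++ [m]))) := by
            rw [ofList_append, ofList_append]
            exact ConGen.Rel.mul (ConGen.Rel.refl _) step1
          have hdec : decodeAux s [] (c ++ [some false])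
              = decodeAux s [] c ++ [m] := by
            rw [dsnoc, hlen]
          rw [hdec, ofList_append]
          have step2 : commCon (ofList (decodeAux s [] c) * ofList [m])
              (ofList (u ++ v) * ofList [m]) :=
            ConGen.Rel.mul hcomm (ConGen.Rel.refl _)
          have e : ofList (u ++ v) * ofList [m] = ofList (u ++ (v ++ [m])) := by
            rw [← ofList_append, List.append_assoc]
          rw [e] at step2
          exact ConGen.Rel.trans step2 (ConGen.Rel.symm step1')
    · -- m not a letter
      have hb' : ∀ x ∈ l, (s:ℕ) ≤ (x:ℕ) ∧ (x:ℕ) < (s:ℕ) + k := by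
        intro x hx
        have := hb x hx
        have hxm : x ≠ m := fun h => hmem (h ▸ hx)
        have hxm' : (x:ℕ) ≠ (m:ℕ) := fun h => hxm (PNat.coe_injective h)
        simp only [hm, padd_coe] at hxm'
        omega
      obtain ⟨c, hlen, hval, hlast, hcomm⟩ := sur k s l hnd hb'
      refine ⟨c ++ [none], by simp [hlen], ?_, ?_, ?_⟩
      · rw [validL_snoc]
        exact ⟨hval, by simp⟩
      · rw [lastState_snoc]
        simp only [Option.isSome_none, Bool.false_eq_true, false_iff]
        rintro ⟨x, hx, hx'⟩
        have : x = m := PNat.coe_injective (by simp only [hm, padd_coe]; omega)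
        exact hmem (this ▸ hx)
      · rw [show decodeAux s [] (c ++ [none]) = decodeAux s [] c from by rw [dsnoc]]
        exact hcomm

end Layer2C
section Counting

def W : Bool → ℕ → Finset (List (Option Bool))
  | true, 0 => ∅
  | false, 0 => {[]}
  | false, k + 1 =>
      ((W false k).image (· ++ [none]) ∪ (W false k).image (· ++ [some false]))
        ∪ (W true k).image (· ++ [some true])
  | true, k + 1 =>
      (W false k).image (· ++ [some false]) ∪ (W true k).image (· ++ [some true])

theorem mem_W : ∀ (k : ℕ) (req : Bool) (c : List (Option Bool)),
    c ∈ W req k ↔ (c.length = k ∧ ValidL false c ∧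
      (req = true → lastState false c = true))
  | 0, req, c => by
    cases req with
    | false =>
      show c ∈ ({[]} : Finset _) ↔ _
      simp only [Finset.mem_singleton]
      constructor
      · rintro rfl; exact ⟨rfl, trivial, by simp⟩
      · rintro ⟨h, -, -⟩; exact List.eq_nil_of_length_eq_zero h
    | true =>
      show c ∈ (∅ : Finset _) ↔ _
      simp only [Finset.notMem_empty, false_iff]
      rintro ⟨h, -, hl⟩
      have : c = [] := List.eq_nil_of_length_eq_zero h
      subst this
      simp at hl
  | k + 1, req, c => by
    have fwd : ∀ (c₀ : List (Option Bool)) (o : Option Bool) (b : Bool),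
        c₀ ∈ W b k → (o = some true → b = true) → o.isSome = true ∨ req = false →
        ((c₀ ++ [o]).length = k + 1 ∧ ValidL false (c₀ ++ [o]) ∧
          (req = true → lastState false (c₀ ++ [o]) = true)) := by
      intro c₀ o b hc₀ ho hreq
      obtain ⟨hlen, hval, hlast⟩ := (mem_W k b c₀).mp hc₀
      refine ⟨by simp [hlen], ?_, ?_⟩
      · rw [validL_snoc]
        exact ⟨hval, fun h => hlast (ho h)⟩
      · rw [lastState_snoc]
        rcases hreq with h | h
        · exact fun _ => h
        · intro h'; rw [h] at h'; exact absurd h' (by simp)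
    have bwd : c.length = k + 1 → ValidL false c →
        ∃ (c₀ : List (Option Bool)) (o : Option Bool), c = c₀ ++ [o] ∧
          c₀.length = k ∧ ((o = none ∧ c₀ ∈ W false k) ∨
            (o = some false ∧ c₀ ∈ W false k) ∨ (o = some true ∧ c₀ ∈ W true k)) := by
      intro hlen hval
      have hne : c ≠ [] := by intro h; subst h; simp at hlen
      refine ⟨c.dropLast, c.getLast hne, (List.dropLast_append_getLast hne).symm, ?_, ?_⟩
      · have : c.dropLast.length = c.length - 1 := List.length_dropLast; omega
      have hc : c = c.dropLast ++ [c.getLast hne] := (List.dropLast_append_getLast hne).symm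
      have hval' : ValidL false c.dropLast ∧
          (c.getLast hne = some true → lastState false c.dropLast = true) := by
        rw [hc] at hval
        exact validL_snoc.mp hval
      have hlen' : c.dropLast.length = k := by have : c.dropLast.length = c.length - 1 := List.length_dropLast; omega
      have hmemF : c.dropLast ∈ W false k :=
        (mem_W k false c.dropLast).mpr ⟨hlen', hval'.1, by simp⟩
      match ho : c.getLast hne with
      | none => exact Or.inl ⟨rfl, hmemF⟩
      | some false => exact Or.inr (Or.inl ⟨rfl, hmemF⟩)
      | some true =>
        refine Or.inr (Or.inr ⟨rfl, (mem_W k true c.dropLast).mpr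
          ⟨hlen', hval'.1, fun _ => hval'.2 ho⟩⟩)
    cases req with
    | false =>
      show c ∈ _ ∪ _ ↔ _
      simp only [Finset.mem_union, Finset.mem_image]
      constructor
      · rintro ((⟨c₀, hc₀, rfl⟩ | ⟨c₀, hc₀, rfl⟩) | ⟨c₀, hc₀, rfl⟩)
        · exact fwd c₀ none false hc₀ (by simp) (Or.inr rfl)
        · exact fwd c₀ (some false) false hc₀ (by simp) (Or.inr rfl)
        · exact fwd c₀ (some true) true hc₀ (fun _ => rfl) (Or.inr rfl)
      · rintro ⟨hlen, hval, -⟩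
        obtain ⟨c₀, o, rfl, hlen₀, (⟨rfl, h⟩ | ⟨rfl, h⟩ | ⟨rfl, h⟩)⟩ := bwd hlen hval
        · exact Or.inl (Or.inl ⟨c₀, h, rfl⟩)
        · exact Or.inl (Or.inr ⟨c₀, h, rfl⟩)
        · exact Or.inr ⟨c₀, h, rfl⟩
    | true =>
      show c ∈ _ ∪ _ ↔ _
      simp only [Finset.mem_union, Finset.mem_image]
      constructor
      · rintro (⟨c₀, hc₀, rfl⟩ | ⟨c₀, hc₀, rfl⟩)
        · have P := fwd c₀ (some false) false hc₀ (by simp) (Or.inl rfl)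
          exact ⟨P.1, P.2.1, fun _ => P.2.2 rfl⟩
        · have P := fwd c₀ (some true) true hc₀ (fun _ => rfl) (Or.inl rfl)
          exact ⟨P.1, P.2.1, fun _ => P.2.2 rfl⟩
      · rintro ⟨hlen, hval, hlast⟩
        obtain ⟨c₀, o, rfl, hlen₀, (⟨rfl, h⟩ | ⟨rfl, h⟩ | ⟨rfl, h⟩)⟩ := bwd hlen hval
        · exfalso
          have := hlast trivial
          rw [lastState_snoc] at this
          simp at this
        · exact Or.inl ⟨c₀, h, rfl⟩
        · exact Or.inr ⟨c₀, h, rfl⟩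

theorem snoc_image_card (s : Finset (List (Option Bool))) (o : Option Bool) :
    (s.image (· ++ [o])).card = s.card :=
  Finset.card_image_of_injective s (List.append_left_injective [o])

theorem snoc_image_disj (s t : Finset (List (Option Bool))) {o o' : Option Bool}
    (h : o ≠ o') : Disjoint (s.image (· ++ [o])) (t.image (· ++ [o'])) := by
  rw [Finset.disjoint_left]
  rintro a ha ha'
  simp only [Finset.mem_image] at ha ha'
  obtain ⟨c, -, rfl⟩ := ha
  obtain ⟨c', -, he⟩ := ha'
  have := List.append_inj_right' he (by simp)
  simp only [List.cons.injEq] at this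
  exact h (this.1.symm)

theorem card_W : ∀ k : ℕ, (W false k).card = Nat.fib (2 * k + 1) ∧
    (W true k).card = Nat.fib (2 * k)
  | 0 => by constructor <;> rfl
  | k + 1 => by
    obtain ⟨hf, ht⟩ := card_W k
    constructor
    · have e : W false (k+1) = ((W false k).image (· ++ [none]) ∪ (W false k).image (· ++ [some false])) ∪ (W true k).image (· ++ [some true]) := rfl
      rw [e, Finset.card_union_of_disjoint, Finset.card_union_of_disjoint,
        snoc_image_card, snoc_image_card, snoc_image_card, hf, ht]
      · have h1 : 2 * (k + 1) + 1 = (2 * k + 1) + 2 := by ring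
        have h2 : Nat.fib (2 * k + 1 + 1) = Nat.fib (2 * k) + Nat.fib (2 * k + 1) :=
          Nat.fib_add_two
        rw [h1, Nat.fib_add_two, h2]
        omega
      · exact snoc_image_disj _ _ (by simp)
      · rw [Finset.disjoint_union_left]
        exact ⟨snoc_image_disj _ _ (by simp), snoc_image_disj _ _ (by simp)⟩
    · have e : W true (k+1) = (W false k).image (· ++ [some false]) ∪ (W true k).image (· ++ [some true]) := rfl
      rw [e, Finset.card_union_of_disjoint (snoc_image_disj _ _ (by simp)),
        snoc_image_card, snoc_image_card, hf, ht]
      have h1 : 2 * (k + 1) = (2 * k) + 2 := by ring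
      rw [h1, Nat.fib_add_two]
      omega

end Counting
section Glue
open FreeMonoid

def tp (i : ℕ) : ℕ+ := ⟨max i 1, lt_of_lt_of_le one_pos (le_max_right i 1)⟩

theorem X_eq_tp (i : ℕ) : X i = braidCon.mk' (of (tp i)) := rfl

theorem tp_coe {i : ℕ} (h : 1 ≤ i) : ((tp i : ℕ+) : ℕ) = i := by
  show max i 1 = i
  omega

theorem tp_coe_pnat (x : ℕ+) : tp (x : ℕ) = x :=
  PNat.coe_injective (tp_coe x.one_le)

theorem prod_map_X : ∀ w : List ℕ,
    (w.map X).prod = braidCon.mk' (ofList (w.map tp))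
  | [] => by simp
  | i :: w => by
    rw [List.map_cons, List.prod_cons, List.map_cons, ofList_cons, map_mul, prod_map_X w,
      X_eq_tp]

theorem mk'_eq_iff {a b : FreeMonoid ℕ+} :
    braidCon.mk' a = braidCon.mk' b ↔ braidCon a b := braidCon.eq

theorem gd1 {j : ℕ} {l : List ℕ+} (hmem : tp j ∈ l) :
    GenDvd j (braidCon.mk' (ofList l)) := by
  obtain ⟨u, v, rfl⟩ := List.append_of_mem hmem
  refine ⟨braidCon.mk' (ofList u), braidCon.mk' (ofList v), ?_⟩
  rw [ofList_append, ofList_cons, map_mul, map_mul, X_eq_tp, mul_assoc]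

theorem gd2 {j : ℕ} {l : List ℕ+} (h : GenDvd j (braidCon.mk' (ofList l))) :
    tp j ∈ l := by
  obtain ⟨δ, ε, h⟩ := h
  obtain ⟨d, rfl⟩ := Con.mk'_surjective δ
  obtain ⟨e, rfl⟩ := Con.mk'_surjective ε
  rw [X_eq_tp, ← map_mul, ← map_mul] at h
  have hrel : braidCon (ofList l) (d * of (tp j) * e) := mk'_eq_iff.mp h
  have := (braid_mem_inv hrel (tp j)).mpr
  refine this ?_
  show tp j ∈ toList (d * of (tp j)) ++ toList e
  refine List.mem_append.mpr (Or.inl ?_)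
  show tp j ∈ toList d ++ [tp j]
  exact List.mem_append.mpr (Or.inr (List.mem_singleton_self _))

/-- the set of braids given by nodup words with letters in `[s, s+k)` -/
def T (s : ℕ+) (k : ℕ) : Set MB :=
  {β | ∃ l : List ℕ+, l.Nodup ∧ (∀ x ∈ l, (s:ℕ) ≤ (x:ℕ) ∧ (x:ℕ) < (s:ℕ) + k) ∧
    β = braidCon.mk' (ofList l)}

theorem SB_eq_T (k : ℕ) : SB (k + 1) = T 1 k := by
  ext β
  constructor
  · rintro ⟨w, hnd, hbs, rfl⟩
    refine ⟨w.map tp, ?_, ?_, prod_map_X w⟩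
    · refine List.Nodup.map_on (fun x hx y hy hxy => ?_) hnd
      have h1 := (hbs x hx).1
      have h2 := (hbs y hy).1
      have := congrArg (fun z : ℕ+ => (z:ℕ)) hxy
      simp only [tp_coe h1, tp_coe h2] at this
      exact this
    · intro x hx
      obtain ⟨i, hi, rfl⟩ := List.mem_map.mp hx
      obtain ⟨h1, h2⟩ := hbs i hi
      rw [tp_coe h1]
      simp only [PNat.one_coe]
      omega
  · rintro ⟨l, hnd, hbs, rfl⟩
    refine ⟨l.map (fun x : ℕ+ => (x:ℕ)), List.Nodup.map PNat.coe_injective hnd, ?_, ?_⟩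
    · intro i hi
      obtain ⟨x, hx, rfl⟩ := List.mem_map.mp hi
      obtain ⟨h1, h2⟩ := hbs x hx
      simp only [PNat.one_coe] at h1 h2
      exact ⟨by omega, by omega⟩
    · rw [prod_map_X, List.map_map]
      congr 1
      have : l.map (tp ∘ (fun x : ℕ+ => (x:ℕ))) = l.map id := by
        refine List.map_congr_left (fun x _ => ?_)
        exact tp_coe_pnat x
      rw [this, List.map_id]

theorem bijOn_decode (s : ℕ+) (k : ℕ) :
    Set.BijOn (fun c => braidCon.mk' (ofList (decodeAux s [] c)))
      ↑(W false k) (T s k) := by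
  refine ⟨?_, ?_, ?_⟩
  · intro c hc
    obtain ⟨hlen, hval, -⟩ := (mem_W k false c).mp (Finset.mem_coe.mp hc)
    refine ⟨decodeAux s [] c, dnodup c s [] List.nodup_nil (by simp), ?_, rfl⟩
    intro x hx
    rcases dmem c s [] x hx with h | h
    · exact absurd h List.not_mem_nil
    · rw [hlen] at h
      exact h
  · intro c hc c' hc' heq
    obtain ⟨hlen, hval, -⟩ := (mem_W k false c).mp (Finset.mem_coe.mp hc)
    obtain ⟨hlen', hval', -⟩ := (mem_W k false c').mp (Finset.mem_coe.mp hc')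
    have nd1 : (decodeAux s [] c).Nodup := dnodup c s [] List.nodup_nil (by simp)
    have hrel : braidCon (ofList (decodeAux s [] c)) (ofList (decodeAux s [] c')) :=
      mk'_eq_iff.mp heq
    have hcomm : commCon (ofList (decodeAux s [] c)) (ofList (decodeAux s [] c')) :=
      (braid_nodup_comm hrel (Or.inl nd1)).2.2
    have hfil := comm_filter_inv hcomm
    set q : ℕ+ := padd s k with hq
    have hqnot : ∀ (c₀ : List (Option Bool)), c₀.length = k → q ∉ decodeAux s [] c₀ := by
      intro c₀ hl hmem
      rcases dmem c₀ s [] q hmem with h | h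
      · exact List.not_mem_nil h
      · rw [hl] at h
        simp only [hq, padd_coe] at h
        omega
    have hcode : codeAux q s k (decodeAux s [] c) = codeAux q s k (decodeAux s [] c') :=
      code_eq k q s _ _ hfil (Or.inr ⟨hqnot c hlen, hqnot c' hlen'⟩)
    have rt1 := roundtrip c false hval s [] q List.nodup_nil (by simp)
      (by simp only [hq, padd_coe, hlen]; omega) (by simp)
    have rt2 := roundtrip c' false hval' s [] q List.nodup_nil (by simp)
      (by simp only [hq, padd_coe, hlen']; omega) (by simp)
    rw [hlen] at rt1
    rw [hlen'] at rt2
    rw [← rt1, ← rt2, hcode]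
  · rintro β ⟨l, hnd, hbd, rfl⟩
    obtain ⟨c, hlen, hval, -, hcomm⟩ := sur k s l hnd hbd
    refine ⟨c, Finset.mem_coe.mpr ((mem_W k false c).mpr ⟨hlen, hval, by simp⟩), ?_⟩
    exact mk'_eq_iff.mpr (commCon_le_braidCon hcomm)

end Glue


/-- The set `E_n = {α ∈ SB_{n+m} : x_j ∤ α for all 1 ≤ j ≤ n}` is in bijection
with `SB_m`; in particular it has `F_{2m-1}` elements. -/
theorem En_equiv_SBm (n m : ℕ) (hn : 2 ≤ n) (hm : 1 ≤ m) :
    Nonempty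
      ({α ∈ SB (n + m) | ∀ j : ℕ, 1 ≤ j → j ≤ n → ¬ GenDvd j α} ≃ SB m) ∧
    ({α ∈ SB (n + m) | ∀ j : ℕ, 1 ≤ j → j ≤ n → ¬ GenDvd j α} : Set MB).ncard =
      Nat.fib (2 * m - 1) := by
  obtain ⟨k, rfl⟩ : ∃ k, m = k + 1 := ⟨m - 1, by omega⟩
  have hnm : n + (k + 1) = (n + k) + 1 := by ring
  have hE : {α ∈ SB (n + (k + 1)) | ∀ j : ℕ, 1 ≤ j → j ≤ n → ¬ GenDvd j α}
      = T (padd 1 n) k := by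
    ext α
    simp only [Set.mem_setOf_eq, Set.mem_sep_iff]
    constructor
    · rintro ⟨hSB, hnd⟩
      rw [hnm, SB_eq_T] at hSB
      obtain ⟨l, hnodup, hbd, rfl⟩ := hSB
      refine ⟨l, hnodup, ?_, rfl⟩
      intro x hx
      obtain ⟨h1, h2⟩ := hbd x hx
      simp only [PNat.one_coe] at h1 h2
      have hlow : n + 1 ≤ (x:ℕ) := by
        by_contra hcon
        push_neg at hcon
        have h1x : (1:ℕ) ≤ (x:ℕ) := x.one_le
        refine hnd (x:ℕ) h1x (by omega) ?_
        have : tp ((x:ℕ)) ∈ l := by rw [tp_coe_pnat]; exact hx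
        exact gd1 this
      simp only [padd_coe, PNat.one_coe]
      omega
    · rintro ⟨l, hnodup, hbd, rfl⟩
      constructor
      · rw [hnm, SB_eq_T]
        refine ⟨l, hnodup, ?_, rfl⟩
        intro x hx
        obtain ⟨h1, h2⟩ := hbd x hx
        simp only [padd_coe, PNat.one_coe] at h1 h2
        simp only [PNat.one_coe]
        exact ⟨by omega, by omega⟩
      · intro j hj1 hjn hdvd
        have := gd2 hdvd
        obtain ⟨h1, -⟩ := hbd _ this
        rw [tp_coe hj1] at h1
        simp only [padd_coe, PNat.one_coe] at h1
        omega
  have hSBm : SB (k + 1) = T 1 k := SB_eq_T k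
  have h1 := bijOn_decode (padd 1 n) k
  have h2 := bijOn_decode 1 k
  rw [← hE] at h1
  rw [← hSBm] at h2
  constructor
  · exact ⟨((h1.equiv _).symm.trans (h2.equiv _))⟩
  · rw [← h1.image_eq, Set.ncard_image_of_injOn h1.injOn, Set.ncard_coe_finset,
      (card_W k).1]
    have harg : 2 * k + 1 = 2 * (k + 1) - 1 := by omega
    rw [harg]
end
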